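/- arXiv:2305.17070 — 6 statements merged into one kernel-verified Lean document; each statement's English description precedes it below -/
import Mathlib

section
/- Let a₁, …, a_r > 0, let P := {Y ∈ ℝ^r : 0 ≤ β_i(Y) ≤ a_i for all i} be the corresponding parallelotope, and set δ_P := Σ_i N_i a_i (equivalently, δ_P = sup_{Y ∈ P} 2ρ(Y)). Then there exist constants C > 0, C' ≥ 0 and a real number δ⁻ < δ_P such that for every t ≥ 1 one has | ∫_{tP} ∏_{j=1}^{N} sinh(α_j(Y))^{m_j} dY − C e^{δ_P t} | ≤ C' e^{δ⁻ t}. -/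
open MeasureTheory Real

lemma exp_integral_Icc {c L : ℝ} (hL : 0 ≤ L) (hc : c ≠ 0) :
    ∫ x in Set.Icc (0:ℝ) L, Real.exp (c * x) = (Real.exp (c * L) - 1) / c := by
  rw [MeasureTheory.integral_Icc_eq_integral_Ioc, ← intervalIntegral.integral_of_le hL]
  have hd : ∀ x ∈ Set.uIcc (0:ℝ) L, HasDerivAt (fun y => Real.exp (c * y) / c)
      (Real.exp (c * x)) x := by
    intro x _
    have h1 : HasDerivAt (fun y : ℝ => c * y) c x := by
      simpa using (hasDerivAt_id x).const_mul c
    have h2 := (Real.hasDerivAt_exp (c * x)).comp x h1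
    have h3 := h2.div_const c
    simpa [mul_div_cancel_right₀ _ hc] using h3
  have hint : IntervalIntegrable (fun x => Real.exp (c * x)) volume 0 L :=
    (Real.continuous_exp.comp (continuous_const.mul continuous_id)).intervalIntegrable 0 L
  rw [intervalIntegral.integral_eq_sub_of_hasDerivAt hd hint]
  simp [sub_div]

lemma exp_integral_Icc_le {c L : ℝ} (hL : 0 ≤ L) :
    |∫ x in Set.Icc (0:ℝ) L, Real.exp (c * x)| ≤ L * Real.exp (max c 0 * L) := by
  have h := MeasureTheory.norm_setIntegral_le_of_norm_le_const (μ := volume)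
      (s := Set.Icc (0:ℝ) L) (f := fun x => Real.exp (c * x))
      (C := Real.exp (max c 0 * L)) (by simp) ?_
  · rw [Real.norm_eq_abs] at h
    calc |∫ x in Set.Icc (0:ℝ) L, Real.exp (c * x)|
        ≤ Real.exp (max c 0 * L) * (volume (Set.Icc (0:ℝ) L)).toReal := h
      _ = L * Real.exp (max c 0 * L) := by
          rw [Real.volume_Icc]; rw [ENNReal.toReal_ofReal (by linarith)]; ring
  · intro x hx
    rw [Real.norm_eq_abs, abs_of_pos (Real.exp_pos _)]
    apply Real.exp_le_exp.2
    calc c * x ≤ max c 0 * x := by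
          apply mul_le_mul_of_nonneg_right (le_max_left _ _) hx.1
      _ ≤ max c 0 * L := by
          apply mul_le_mul_of_nonneg_left hx.2 (le_max_right _ _)

lemma exists_scaling (r : ℕ)
    (β : Module.Basis (Fin r) ℝ (Module.Dual ℝ (EuclideanSpace ℝ (Fin r)))) :
    ∃ c : ℝ, 0 < c ∧ ∀ (s : Set (Fin r → ℝ)), MeasurableSet s →
      ∀ (g : (Fin r → ℝ) → ℝ), Continuous g →
      (∫ Y in {Y : EuclideanSpace ℝ (Fin r) | (fun i => β i Y) ∈ s}, g (fun i => β i Y))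
        = c * ∫ u in s, g u := by
  set E := EuclideanSpace ℝ (Fin r)
  let L : E →ₗ[ℝ] (Fin r → ℝ) := LinearMap.pi (fun i => β i)
  have hLapp : ∀ (Y : E) i, L Y i = β i Y := fun Y i => rfl
  have hinj : Function.Injective L := by
    rw [← LinearMap.ker_eq_bot, LinearMap.ker_eq_bot']
    intro Y hY
    have hβY : ∀ i, β i Y = 0 := fun i => congrFun hY i
    rw [← Module.forall_dual_apply_eq_zero_iff ℝ Y]
    intro φ
    rw [← Module.Basis.sum_repr β φ]
    simp only [LinearMap.sum_apply, LinearMap.smul_apply, hβY, smul_zero, Finset.sum_const_zero]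
  have hdim : Module.finrank ℝ E = Module.finrank ℝ (Fin r → ℝ) := by
    simp [E, finrank_euclideanSpace_fin]
  let e : E ≃ₗ[ℝ] (Fin r → ℝ) := L.linearEquivOfInjective hinj hdim
  let ce : E ≃L[ℝ] (Fin r → ℝ) := e.toContinuousLinearEquiv
  have hce : ∀ (Y : E), ce Y = fun i => β i Y := fun Y => by
    ext i
    show e Y i = β i Y
    rw [LinearMap.linearEquivOfInjective_apply]
    exact hLapp Y i
  haveI : Measure.IsAddHaarMeasure ((volume : Measure E).map ce) :=
    ce.isAddHaarMeasure_map volume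
  have hmap : (volume : Measure E).map ce
      = Measure.addHaarScalarFactor ((volume : Measure E).map ce) volume • volume :=
    Measure.isAddLeftInvariant_eq_smul _ _
  set c0 := Measure.addHaarScalarFactor ((volume : Measure E).map ce) volume with hc0
  have hc0pos : 0 < c0 := Measure.addHaarScalarFactor_pos_of_isAddHaarMeasure _ _
  refine ⟨c0, hc0pos, fun s hs g hg => ?_⟩
  have h1 : {Y : E | (fun i => β i Y) ∈ s} = ⇑ce ⁻¹' s := by
    ext Y
    simp [hce Y]
  rw [h1]
  have h2 : (∫ u in s, g u ∂((volume : Measure E).map ce))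
      = ∫ Y in ⇑ce ⁻¹' s, g (ce Y) := by
    apply setIntegral_map hs (hg.aestronglyMeasurable) ce.continuous.measurable.aemeasurable
  have h3 : ∀ Y, g (ce Y) = g (fun i => β i Y) := fun Y => by rw [hce Y]
  simp_rw [h3] at h2
  rw [← h2, hmap]
  have : (c0 • (volume : Measure (Fin r → ℝ))) = ((c0 : ENNReal) • (volume : Measure (Fin r → ℝ))) := rfl
  rw [this, Measure.restrict_smul, integral_smul_measure, ENNReal.coe_toReal, smul_eq_mul]

lemma sinh_pow_eq (x : ℝ) (n : ℕ) :
    Real.sinh x ^ n = ∑ k ∈ Finset.range (n+1),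
      ((-1:ℝ)^(k+n) * ((n.choose k) : ℝ) / 2^n) * Real.exp ((2*(k:ℝ) - n) * x) := by
  rw [Real.sinh_eq, div_pow, sub_pow, Finset.sum_div]
  refine Finset.sum_congr rfl fun k hk => ?_
  have hk' : k ≤ n := Nat.lt_succ_iff.mp (Finset.mem_range.mp hk)
  have he : Real.exp ((2*(k:ℝ) - n) * x) = Real.exp ((k:ℝ)*x) * Real.exp (((n - k : ℕ):ℝ)*(-x)) := by
    rw [← Real.exp_add]; congr 1; rw [Nat.cast_sub hk']; ring
  rw [← Real.exp_nat_mul, ← Real.exp_nat_mul, he]; ring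

lemma prod_sinh_pow {N : ℕ} (m : Fin N → ℕ) (x : Fin N → ℝ) :
    ∏ j, Real.sinh (x j) ^ (m j)
      = ∑ k ∈ Fintype.piFinset (fun j => Finset.range (m j + 1)),
          (∏ j, ((-1:ℝ)^(k j + m j) * (((m j).choose (k j)) : ℝ) / 2^(m j)))
            * Real.exp (∑ j, (2*(k j:ℝ) - m j) * x j) := by
  calc ∏ j, Real.sinh (x j) ^ (m j)
      = ∏ j, ∑ k ∈ Finset.range (m j + 1),
          ((-1:ℝ)^(k + m j) * (((m j).choose k) : ℝ) / 2^(m j)) * Real.exp ((2*(k:ℝ) - m j) * x j) :=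
        Finset.prod_congr rfl fun j _ => sinh_pow_eq (x j) (m j)
    _ = _ := by
        rw [Finset.prod_univ_sum]
        refine Finset.sum_congr rfl fun k _ => ?_
        rw [Finset.prod_mul_distrib, Real.exp_sum]

lemma integral_cube_prod {r : ℕ} (L : Fin r → ℝ) (f : Fin r → ℝ → ℝ) :
    ∫ u in Set.pi Set.univ (fun i => Set.Icc 0 (L i)), ∏ i, f i (u i)
      = ∏ i, ∫ x in Set.Icc (0:ℝ) (L i), f i x := by
  rw [← MeasureTheory.integral_indicator (MeasurableSet.univ_pi fun i => measurableSet_Icc)]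
  have key : ∀ u : Fin r → ℝ,
      (Set.pi Set.univ fun i => Set.Icc 0 (L i)).indicator (fun u => ∏ i, f i (u i)) u
      = ∏ i, (Set.Icc (0:ℝ) (L i)).indicator (f i) (u i) := by
    intro u
    by_cases h : u ∈ Set.pi Set.univ fun i => Set.Icc 0 (L i)
    · rw [Set.indicator_of_mem h]
      exact Finset.prod_congr rfl fun i _ => (Set.indicator_of_mem (h i trivial) _).symm
    · rw [Set.indicator_of_notMem h]
      rw [Set.mem_univ_pi] at h
      push_neg at h
      obtain ⟨i, hi⟩ := h
      exact (Finset.prod_eq_zero (Finset.mem_univ i) (Set.indicator_of_notMem hi _)).symm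
  simp_rw [key]
  rw [MeasureTheory.integral_fintype_prod_volume_eq_prod
    (fun i x => (Set.Icc (0:ℝ) (L i)).indicator (f i) x)]
  exact Finset.prod_congr rfl fun i _ => MeasureTheory.integral_indicator measurableSet_Icc

lemma cube_integral_eq {r N : ℕ} (m : Fin N → ℕ) (c : Fin N → Fin r → ℝ) (L : Fin r → ℝ) :
    (∫ u in Set.pi Set.univ (fun i => Set.Icc (0:ℝ) (L i)),
        ∏ j, Real.sinh (∑ i, c j i * u i) ^ (m j))
    = ∑ k ∈ Fintype.piFinset (fun j => Finset.range (m j + 1)),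
        (∏ j, ((-1:ℝ)^(k j + m j) * (((m j).choose (k j)):ℝ) / 2^(m j)))
          * ∏ i, ∫ x in Set.Icc (0:ℝ) (L i),
              Real.exp ((∑ j, (2*(k j:ℝ) - m j) * c j i) * x) := by
  have hfun : ∀ u : Fin r → ℝ,
      (∏ j, Real.sinh (∑ i, c j i * u i) ^ (m j))
      = ∑ k ∈ Fintype.piFinset (fun j => Finset.range (m j + 1)),
          (∏ j, ((-1:ℝ)^(k j + m j) * (((m j).choose (k j)):ℝ) / 2^(m j)))
            * ∏ i, Real.exp ((∑ j, (2*(k j:ℝ) - m j) * c j i) * u i) := by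
    intro u
    rw [prod_sinh_pow m (fun j => ∑ i, c j i * u i)]
    refine Finset.sum_congr rfl fun k _ => ?_
    congr 1
    rw [← Real.exp_sum]
    congr 1
    simp_rw [Finset.mul_sum]
    rw [Finset.sum_comm]
    refine Finset.sum_congr rfl fun i _ => ?_
    rw [Finset.sum_mul]
    exact Finset.sum_congr rfl fun j _ => by ring
  simp_rw [hfun]
  rw [MeasureTheory.integral_finset_sum]
  · refine Finset.sum_congr rfl fun k _ => ?_
    rw [MeasureTheory.integral_const_mul]
    congr 1
    exact integral_cube_prod L (fun i x => Real.exp ((∑ j, (2*(k j:ℝ) - m j) * c j i) * x))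
  · intro k _
    apply ContinuousOn.integrableOn_compact
    · exact isCompact_univ_pi (fun i => isCompact_Icc)
    · apply Continuous.continuousOn
      continuity

set_option maxHeartbeats 1600000 in
/-- **Harish–Chandra volume of a parallelotope domain.**
Let `β₁, …, β_r` be a basis of the dual of `ℝ^r`, `α₁, …, α_N` nonzero linear forms that are
nonnegative combinations of the `β_i`, with multiplicities `m_j`, and `2ρ = Σ m_j α_j = Σ Nᵢ βᵢ`
with `Nᵢ > 0`.  For `a_i > 0`, let `P = {Y : 0 ≤ βᵢ Y ≤ aᵢ}` and `δ_P = Σ Nᵢ aᵢ`.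
Then `∫_{tP} ∏ sinh(α_j Y)^{m_j} dY = C e^{δ_P t} + O(e^{δ⁻ t})` for some `δ⁻ < δ_P`. -/
theorem parallelotope_volume_asymptotics
    (r : ℕ) (hr : 0 < r)
    (β : Module.Basis (Fin r) ℝ (Module.Dual ℝ (EuclideanSpace ℝ (Fin r))))
    (N : ℕ) (hN : 0 < N)
    (α : Fin N → Module.Dual ℝ (EuclideanSpace ℝ (Fin r)))
    (hα0 : ∀ j, α j ≠ 0)
    (hαβ : ∀ j, ∃ c : Fin r → ℝ, (∀ i, 0 ≤ c i) ∧ α j = ∑ i, c i • (β i : Module.Dual ℝ (EuclideanSpace ℝ (Fin r))))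
    (m : Fin N → ℕ) (hm : ∀ j, 0 < m j)
    (Ncoef : Fin r → ℝ) (hNcoef : ∀ i, 0 < Ncoef i)
    (h2ρ : (∑ j, (m j : ℝ) • α j) = ∑ i, Ncoef i • (β i : Module.Dual ℝ (EuclideanSpace ℝ (Fin r))))
    (a : Fin r → ℝ) (ha : ∀ i, 0 < a i) :
    ∃ C > (0 : ℝ), ∃ C' ≥ (0 : ℝ), ∃ δm : ℝ, δm < ∑ i, Ncoef i * a i ∧
      ∀ t : ℝ, 1 ≤ t →
        |(∫ Y in {Y : EuclideanSpace ℝ (Fin r) | ∀ i, 0 ≤ β i Y ∧ β i Y ≤ t * a i},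
              ∏ j, (Real.sinh (α j Y)) ^ (m j)) -
            C * Real.exp ((∑ i, Ncoef i * a i) * t)| ≤ C' * Real.exp (δm * t) := by
  haveI : Nonempty (Fin r) := ⟨⟨0, hr⟩⟩
  choose c hcnn hcα using hαβ
  -- applying α j to a point
  have hαapp : ∀ j (Y : EuclideanSpace ℝ (Fin r)), α j Y = ∑ i, c j i * β i Y := by
    intro j Y
    rw [hcα j]
    simp
  -- identification of coefficients of 2ρ
  have hNc : ∀ i, ∑ j, (m j : ℝ) * c j i = Ncoef i := by
    have h : ∑ i, (∑ j, (m j:ℝ) * c j i) • (β i : Module.Dual ℝ (EuclideanSpace ℝ (Fin r)))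
        = ∑ i, Ncoef i • (β i : Module.Dual ℝ (EuclideanSpace ℝ (Fin r))) := by
      rw [← h2ρ]
      calc ∑ i, (∑ j, (m j:ℝ) * c j i) • (β i : Module.Dual ℝ (EuclideanSpace ℝ (Fin r)))
          = ∑ i, ∑ j, ((m j:ℝ) * c j i) • (β i : Module.Dual ℝ (EuclideanSpace ℝ (Fin r))) := by
            simp_rw [Finset.sum_smul]
        _ = ∑ j, ∑ i, ((m j:ℝ) * c j i) • (β i : Module.Dual ℝ (EuclideanSpace ℝ (Fin r))) :=
            Finset.sum_comm
        _ = ∑ j, (m j:ℝ) • α j := by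
            refine Finset.sum_congr rfl fun j _ => ?_
            rw [hcα j, Finset.smul_sum]
            exact Finset.sum_congr rfl fun i _ => (smul_smul _ _ _).symm
    intro i
    have h2 := congrArg (fun φ => ⇑(β.repr φ)) h
    simp only [β.repr_sum_self] at h2
    exact congrFun h2 i
  -- each α j has a positive coefficient
  have hcpos : ∀ j, ∃ i, 0 < c j i := by
    intro j
    by_contra hcon
    push_neg at hcon
    have hz : ∀ i, c j i = 0 := fun i => le_antisymm (hcon i) (hcnn j i)
    apply hα0 j
    rw [hcα j]
    simp [hz]
  obtain ⟨cH, hcH, hscale⟩ := exists_scaling r β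
  -- the exact integral identity over the cube
  have hIeq : ∀ t : ℝ,
      (∫ Y in {Y : EuclideanSpace ℝ (Fin r) | ∀ i, 0 ≤ β i Y ∧ β i Y ≤ t * a i},
        ∏ j, (Real.sinh (α j Y)) ^ (m j))
      = cH * ∑ k ∈ Fintype.piFinset (fun j => Finset.range (m j + 1)),
          (∏ j, ((-1:ℝ)^(k j + m j) * (((m j).choose (k j)):ℝ) / 2^(m j)))
            * ∏ i, ∫ x in Set.Icc (0:ℝ) (t * a i),
                Real.exp ((∑ j, (2*(k j:ℝ) - m j) * c j i) * x) := by
    intro t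
    have hsetEq : {Y : EuclideanSpace ℝ (Fin r) | ∀ i, 0 ≤ β i Y ∧ β i Y ≤ t * a i}
        = {Y : EuclideanSpace ℝ (Fin r) |
            (fun i => β i Y) ∈ Set.pi Set.univ (fun i => Set.Icc (0:ℝ) (t * a i))} := by
      ext Y; simp only [Set.mem_setOf_eq, Set.mem_univ_pi, Set.mem_Icc]
    have hg : Continuous (fun u : Fin r → ℝ => ∏ j, Real.sinh (∑ i, c j i * u i) ^ (m j)) :=
      continuous_finset_prod _ fun j _ =>
        (Real.continuous_sinh.comp (continuous_finset_sum _ fun i _ =>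
          (continuous_const.mul (continuous_apply i)))).pow _
    rw [hsetEq]
    simp_rw [hαapp]
    rw [show (∫ Y in {Y : EuclideanSpace ℝ (Fin r) |
            (fun i => β i Y) ∈ Set.pi Set.univ (fun i => Set.Icc (0:ℝ) (t * a i))},
          ∏ j, Real.sinh (∑ i, c j i * β i Y) ^ (m j))
        = cH * ∫ u in Set.pi Set.univ (fun i => Set.Icc (0:ℝ) (t * a i)),
            ∏ j, Real.sinh (∑ i, c j i * u i) ^ (m j) from
      hscale _ (MeasurableSet.univ_pi fun i => measurableSet_Icc) _ hg]
    rw [cube_integral_eq m c (fun i => t * a i)]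
  have hk0K : (fun j => m j) ∈ Fintype.piFinset (fun j => Finset.range (m j + 1)) := by
    rw [Fintype.mem_piFinset]; intro j; exact Finset.self_mem_range_succ _
  have hsplit : ∀ t : ℝ, 1 ≤ t →
      (∫ Y in {Y : EuclideanSpace ℝ (Fin r) | ∀ i, 0 ≤ β i Y ∧ β i Y ≤ t * a i},
        ∏ j, (Real.sinh (α j Y)) ^ (m j)) - (cH * ((∏ j, ((1:ℝ)/2^(m j))) * (∏ i, (Ncoef i)⁻¹))) * Real.exp ((∑ i, Ncoef i * a i) * t)
      = cH * ((∏ j, ((1:ℝ)/2^(m j))) * (∏ i, (Ncoef i)⁻¹) * (∑ S ∈ Finset.univ.powerset.erase Finset.univ,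
          ((∏ i ∈ S, Real.exp (Ncoef i * a i * t)) * ∏ i ∈ Finset.univ \ S, (-1:ℝ))) + (∑ k ∈ (Fintype.piFinset (fun j => Finset.range (m j + 1))).erase (fun j => m j), (∏ j, ((-1:ℝ)^(k j + m j) * (((m j).choose (k j)):ℝ) / 2^(m j))) * (∏ i, ∫ x in Set.Icc (0:ℝ) (t * a i), Real.exp ((∑ j, (2*((k j):ℝ) - m j) * c j i) * x)))) := by
    intro t ht
    rw [hIeq t]
    rw [← Finset.add_sum_erase _ _ hk0K]
    have hW0 : (∏ j, ((-1:ℝ)^((fun j => m j) j + m j) * (((m j).choose ((fun j => m j) j)):ℝ) / 2^(m j))) = (∏ j, ((1:ℝ)/2^(m j))) := by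
      refine Finset.prod_congr rfl fun j _ => ?_
      rw [Nat.choose_self]
      rw [show ((-1:ℝ))^((fun j => m j) j + m j) = 1 from Even.neg_one_pow ⟨m j, rfl⟩]
      ring
    have hPRD : (∏ i, ∫ x in Set.Icc (0:ℝ) (t * a i), Real.exp ((∑ j, (2*(((fun j => m j) j):ℝ) - m j) * c j i) * x))
        = ∏ i, (Real.exp (Ncoef i * a i * t) - 1) * (Ncoef i)⁻¹ := by
      refine Finset.prod_congr rfl fun i _ => ?_
      have hL : (0:ℝ) ≤ t * a i := mul_nonneg (by linarith) (ha i).le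
      have hsum : (∑ j, (2*(((fun j => m j) j):ℝ) - m j) * c j i) = Ncoef i := by
        rw [← hNc i]; exact Finset.sum_congr rfl fun j _ => by ring
      rw [hsum, exp_integral_Icc hL (hNcoef i).ne',
        show Ncoef i * (t * a i) = Ncoef i * a i * t by ring, div_eq_mul_inv]
    have hexpand : (∏ i, (Real.exp (Ncoef i * a i * t) - 1) * (Ncoef i)⁻¹)
        = (Real.exp ((∑ i, Ncoef i * a i) * t) + (∑ S ∈ Finset.univ.powerset.erase Finset.univ,
          ((∏ i ∈ S, Real.exp (Ncoef i * a i * t)) * ∏ i ∈ Finset.univ \ S, (-1:ℝ)))) * (∏ i, (Ncoef i)⁻¹) := by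
      rw [Finset.prod_mul_distrib]
      congr 1
      rw [Finset.prod_congr rfl (fun i _ =>
        show Real.exp (Ncoef i * a i * t) - 1 = Real.exp (Ncoef i * a i * t) + (-1) by ring)]
      rw [Finset.prod_add]
      rw [← Finset.add_sum_erase _ _ (Finset.mem_powerset_self (Finset.univ : Finset (Fin r)))]
      congr 1
      rw [Finset.sdiff_self, Finset.prod_empty, mul_one, ← Real.exp_sum, ← Finset.sum_mul]
    rw [hW0, hPRD, hexpand]
    ring
  -- minimum of the Ncoef i * a i
  obtain ⟨b0, hb0pos, hb0le⟩ : ∃ b0 : ℝ, 0 < b0 ∧ ∀ i, b0 ≤ Ncoef i * a i := by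
    refine ⟨Finset.univ.inf' Finset.univ_nonempty (fun i => Ncoef i * a i), ?_, ?_⟩
    · rw [Finset.lt_inf'_iff]
      exact fun i _ => mul_pos (hNcoef i) (ha i)
    · exact fun i => Finset.inf'_le _ (Finset.mem_univ i)
  -- partial sums of the Ncoef i * a i are uniformly below the full sum
  have hSsum : ∀ S : Finset (Fin r), S ≠ Finset.univ →
      (∑ i ∈ S, Ncoef i * a i) ≤ (∑ i, Ncoef i * a i) - b0 := by
    intro S hS
    obtain ⟨i₀, hi₀⟩ : ∃ i₀, i₀ ∉ S := by
      by_contra h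
      push_neg at h
      exact hS (Finset.eq_univ_iff_forall.mpr h)
    have hsub : S ⊆ Finset.univ.erase i₀ := fun x hx =>
      Finset.mem_erase.mpr ⟨fun he => hi₀ (he ▸ hx), Finset.mem_univ x⟩
    have h1 : ∑ i ∈ S, Ncoef i * a i ≤ ∑ i ∈ Finset.univ.erase i₀, Ncoef i * a i :=
      Finset.sum_le_sum_of_subset_of_nonneg hsub
        (fun i _ _ => (mul_pos (hNcoef i) (ha i)).le)
    have h2 : Ncoef i₀ * a i₀ + ∑ i ∈ Finset.univ.erase i₀, Ncoef i * a i
        = ∑ i, Ncoef i * a i :=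
      Finset.add_sum_erase _ (fun i => Ncoef i * a i) (Finset.mem_univ i₀)
    have h3 := hb0le i₀
    linarith
  -- strict gap for every non-leading index k
  have hγ : ∀ k ∈ (Fintype.piFinset (fun j => Finset.range (m j + 1))).erase (fun j => m j),
      (∑ i, max (∑ j, (2*((k j):ℝ) - m j) * c j i) 0 * a i) < ∑ i, Ncoef i * a i := by
    intro k hk
    obtain ⟨hkne, hkK⟩ := Finset.mem_erase.mp hk
    have hkle : ∀ j, k j ≤ m j := fun j =>
      Nat.lt_succ_iff.mp (Finset.mem_range.mp ((Fintype.mem_piFinset.mp hkK) j))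
    obtain ⟨j₀, hj₀⟩ : ∃ j₀, k j₀ ≠ m j₀ := Function.ne_iff.mp hkne
    have hj₀lt : k j₀ < m j₀ := lt_of_le_of_ne (hkle j₀) hj₀
    obtain ⟨i₀, hi₀⟩ := hcpos j₀
    have hlam_le : ∀ i, (∑ j, (2*((k j):ℝ) - m j) * c j i) ≤ Ncoef i := by
      intro i
      rw [← hNc i]
      refine Finset.sum_le_sum fun j _ => ?_
      have h4 : (2*((k j):ℝ) - m j) ≤ (m j : ℝ) := by
        have := (Nat.cast_le (α := ℝ)).mpr (hkle j)
        linarith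
      exact mul_le_mul_of_nonneg_right h4 (hcnn j i)
    have hlam_lt : (∑ j, (2*((k j):ℝ) - m j) * c j i₀) < Ncoef i₀ := by
      rw [← hNc i₀]
      refine Finset.sum_lt_sum (fun j _ => ?_) ⟨j₀, Finset.mem_univ j₀, ?_⟩
      · have h4 : (2*((k j):ℝ) - m j) ≤ (m j : ℝ) := by
          have := (Nat.cast_le (α := ℝ)).mpr (hkle j)
          linarith
        exact mul_le_mul_of_nonneg_right h4 (hcnn j i₀)
      · have h4 : (2*((k j₀):ℝ) - m j₀) < (m j₀ : ℝ) := by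
          have := (Nat.cast_lt (α := ℝ)).mpr hj₀lt
          linarith
        exact mul_lt_mul_of_pos_right h4 hi₀
    refine Finset.sum_lt_sum
      (fun i _ => mul_le_mul_of_nonneg_right (max_le (hlam_le i) (hNcoef i).le) (ha i).le)
      ⟨i₀, Finset.mem_univ i₀,
        mul_lt_mul_of_pos_right (max_lt hlam_lt (hNcoef i₀)) (ha i₀)⟩
  -- the erased index set is nonempty
  have hK'ne : ((Fintype.piFinset (fun j => Finset.range (m j + 1))).erase (fun j => m j)).Nonempty := by
    refine ⟨Function.update (fun j => m j) ⟨0, hN⟩ 0, Finset.mem_erase.mpr ⟨?_, ?_⟩⟩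
    · intro h
      have h5 := congrFun h ⟨0, hN⟩
      rw [Function.update_self] at h5
      exact (hm ⟨0, hN⟩).ne h5
    · rw [Fintype.mem_piFinset]
      intro j
      rw [Finset.mem_range]
      by_cases hj : j = ⟨0, hN⟩
      · subst hj
        rw [Function.update_self]
        omega
      · rw [Function.update_of_ne hj]
        omega
  -- uniform gap η₂
  obtain ⟨η₂, hη₂pos, hη₂le⟩ : ∃ η₂ : ℝ, 0 < η₂ ∧ ∀ k ∈ (Fintype.piFinset (fun j => Finset.range (m j + 1))).erase (fun j => m j),
      (∑ i, max (∑ j, (2*((k j):ℝ) - m j) * c j i) 0 * a i) ≤ (∑ i, Ncoef i * a i) - η₂ := by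
    refine ⟨((Fintype.piFinset (fun j => Finset.range (m j + 1))).erase (fun j => m j)).inf' hK'ne
      (fun k => (∑ i, Ncoef i * a i) - (∑ i, max (∑ j, (2*((k j):ℝ) - m j) * c j i) 0 * a i)), ?_, ?_⟩
    · rw [Finset.lt_inf'_iff]
      intro k hk
      linarith [hγ k hk]
    · intro k hk
      have := Finset.inf'_le (fun k => (∑ i, Ncoef i * a i) - (∑ i, max (∑ j, (2*((k j):ℝ) - m j) * c j i) 0 * a i)) hk
      linarith
  set η : ℝ := min b0 η₂ with hη
  have hηpos : 0 < η := lt_min hb0pos hη₂pos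
  have hW0pos : 0 < (∏ j, ((1:ℝ)/2^(m j))) := Finset.prod_pos fun j _ => by positivity
  have hpinvpos : 0 < (∏ i, (Ncoef i)⁻¹) := Finset.prod_pos fun i _ => inv_pos.mpr (hNcoef i)
  have hprodapos : 0 < (∏ i, a i) := Finset.prod_pos fun i _ => ha i
  have hSWnn : 0 ≤ (∑ k ∈ (Fintype.piFinset (fun j => Finset.range (m j + 1))).erase (fun j => m j), |(∏ j, ((-1:ℝ)^(k j + m j) * (((m j).choose (k j)):ℝ) / 2^(m j)))|) := Finset.sum_nonneg fun k _ => abs_nonneg _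
  refine ⟨cH * ((∏ j, ((1:ℝ)/2^(m j))) * (∏ i, (Ncoef i)⁻¹)), mul_pos hcH (mul_pos hW0pos hpinvpos),
    cH * ((∏ j, ((1:ℝ)/2^(m j))) * (∏ i, (Ncoef i)⁻¹) * (((Finset.univ.powerset.erase (Finset.univ : Finset (Fin r))).card : ℝ))
      + (∑ k ∈ (Fintype.piFinset (fun j => Finset.range (m j + 1))).erase (fun j => m j), |(∏ j, ((-1:ℝ)^(k j + m j) * (((m j).choose (k j)):ℝ) / 2^(m j)))|) * (∏ i, a i) * (r.factorial : ℝ) * (2/η)^r), ?_,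
    (∑ i, Ncoef i * a i) - η/2, by linarith, ?_⟩
  · refine mul_nonneg hcH.le (add_nonneg
      (mul_nonneg (mul_nonneg hW0pos.le hpinvpos.le) (Nat.cast_nonneg _))
      (mul_nonneg (mul_nonneg (mul_nonneg hSWnn hprodapos.le) (Nat.cast_nonneg _))
        (by positivity)))
  intro t ht
  have ht0 : (0:ℝ) < t := by linarith
  rw [hsplit t ht, abs_mul, abs_of_pos hcH]
  -- bound on the first error term
  have hE1 : |(∏ j, ((1:ℝ)/2^(m j))) * (∏ i, (Ncoef i)⁻¹) * (∑ S ∈ Finset.univ.powerset.erase Finset.univ,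
          ((∏ i ∈ S, Real.exp (Ncoef i * a i * t)) * ∏ i ∈ Finset.univ \ S, (-1:ℝ)))|
      ≤ (∏ j, ((1:ℝ)/2^(m j))) * (∏ i, (Ncoef i)⁻¹) * (((Finset.univ.powerset.erase (Finset.univ : Finset (Fin r))).card : ℝ)) * Real.exp (((∑ i, Ncoef i * a i) - b0) * t) := by
    have hsum1 : |(∑ S ∈ Finset.univ.powerset.erase Finset.univ,
          ((∏ i ∈ S, Real.exp (Ncoef i * a i * t)) * ∏ i ∈ Finset.univ \ S, (-1:ℝ)))|
        ≤ (((Finset.univ.powerset.erase (Finset.univ : Finset (Fin r))).card : ℝ)) * Real.exp (((∑ i, Ncoef i * a i) - b0) * t) := by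
      calc |(∑ S ∈ Finset.univ.powerset.erase Finset.univ,
          ((∏ i ∈ S, Real.exp (Ncoef i * a i * t)) * ∏ i ∈ Finset.univ \ S, (-1:ℝ)))| ≤ ∑ S ∈ Finset.univ.powerset.erase Finset.univ,
          |(∏ i ∈ S, Real.exp (Ncoef i * a i * t)) * ∏ i ∈ Finset.univ \ S, (-1:ℝ)| :=
        Finset.abs_sum_le_sum_abs _ _
      _ ≤ ∑ S ∈ Finset.univ.powerset.erase Finset.univ,
          Real.exp (((∑ i, Ncoef i * a i) - b0) * t) := by
        refine Finset.sum_le_sum fun S hS => ?_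
        obtain ⟨hSne, _⟩ := Finset.mem_erase.mp hS
        rw [abs_mul]
        have habs1 : |∏ i ∈ Finset.univ \ S, (-1:ℝ)| = 1 := by
          rw [Finset.abs_prod]
          simp
        rw [habs1, mul_one, Finset.abs_prod]
        have : ∀ i ∈ S, |Real.exp (Ncoef i * a i * t)| = Real.exp (Ncoef i * a i * t) :=
          fun i _ => abs_of_pos (Real.exp_pos _)
        rw [Finset.prod_congr rfl this, ← Real.exp_sum]
        apply Real.exp_le_exp.mpr
        rw [← Finset.sum_mul]
        exact mul_le_mul_of_nonneg_right (hSsum S hSne) ht0.le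
      _ = (((Finset.univ.powerset.erase (Finset.univ : Finset (Fin r))).card : ℝ)) * Real.exp (((∑ i, Ncoef i * a i) - b0) * t) := by
        rw [Finset.sum_const, nsmul_eq_mul]
    calc |(∏ j, ((1:ℝ)/2^(m j))) * (∏ i, (Ncoef i)⁻¹) * (∑ S ∈ Finset.univ.powerset.erase Finset.univ,
          ((∏ i ∈ S, Real.exp (Ncoef i * a i * t)) * ∏ i ∈ Finset.univ \ S, (-1:ℝ)))|
        = ((∏ j, ((1:ℝ)/2^(m j))) * (∏ i, (Ncoef i)⁻¹)) * |(∑ S ∈ Finset.univ.powerset.erase Finset.univ,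
          ((∏ i ∈ S, Real.exp (Ncoef i * a i * t)) * ∏ i ∈ Finset.univ \ S, (-1:ℝ)))| := by
          rw [abs_mul, abs_of_pos (mul_pos hW0pos hpinvpos)]
      _ ≤ ((∏ j, ((1:ℝ)/2^(m j))) * (∏ i, (Ncoef i)⁻¹)) * ((((Finset.univ.powerset.erase (Finset.univ : Finset (Fin r))).card : ℝ)) * Real.exp (((∑ i, Ncoef i * a i) - b0) * t)) :=
          mul_le_mul_of_nonneg_left hsum1 (mul_pos hW0pos hpinvpos).le
      _ = (∏ j, ((1:ℝ)/2^(m j))) * (∏ i, (Ncoef i)⁻¹) * (((Finset.univ.powerset.erase (Finset.univ : Finset (Fin r))).card : ℝ)) * Real.exp (((∑ i, Ncoef i * a i) - b0) * t) := by ring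
  -- bound on the second error term
  have hE2 : |(∑ k ∈ (Fintype.piFinset (fun j => Finset.range (m j + 1))).erase (fun j => m j), (∏ j, ((-1:ℝ)^(k j + m j) * (((m j).choose (k j)):ℝ) / 2^(m j))) * (∏ i, ∫ x in Set.Icc (0:ℝ) (t * a i), Real.exp ((∑ j, (2*((k j):ℝ) - m j) * c j i) * x)))|
      ≤ (∑ k ∈ (Fintype.piFinset (fun j => Finset.range (m j + 1))).erase (fun j => m j), |(∏ j, ((-1:ℝ)^(k j + m j) * (((m j).choose (k j)):ℝ) / 2^(m j)))|) * (∏ i, a i) * t^r * Real.exp (((∑ i, Ncoef i * a i) - η₂) * t) := by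
    calc |(∑ k ∈ (Fintype.piFinset (fun j => Finset.range (m j + 1))).erase (fun j => m j), (∏ j, ((-1:ℝ)^(k j + m j) * (((m j).choose (k j)):ℝ) / 2^(m j))) * (∏ i, ∫ x in Set.Icc (0:ℝ) (t * a i), Real.exp ((∑ j, (2*((k j):ℝ) - m j) * c j i) * x)))| ≤ ∑ k ∈ (Fintype.piFinset (fun j => Finset.range (m j + 1))).erase (fun j => m j), |(∏ j, ((-1:ℝ)^(k j + m j) * (((m j).choose (k j)):ℝ) / 2^(m j))) * (∏ i, ∫ x in Set.Icc (0:ℝ) (t * a i), Real.exp ((∑ j, (2*((k j):ℝ) - m j) * c j i) * x))| :=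
        Finset.abs_sum_le_sum_abs _ _
      _ ≤ ∑ k ∈ (Fintype.piFinset (fun j => Finset.range (m j + 1))).erase (fun j => m j),
          |(∏ j, ((-1:ℝ)^(k j + m j) * (((m j).choose (k j)):ℝ) / 2^(m j)))| * ((∏ i, a i) * t^r * Real.exp (((∑ i, Ncoef i * a i) - η₂) * t)) := by
        refine Finset.sum_le_sum fun k hk => ?_
        rw [abs_mul]
        refine mul_le_mul_of_nonneg_left ?_ (abs_nonneg _)
        calc |(∏ i, ∫ x in Set.Icc (0:ℝ) (t * a i), Real.exp ((∑ j, (2*((k j):ℝ) - m j) * c j i) * x))| ≤ ∏ i, ((t * a i) * Real.exp (max (∑ j, (2*((k j):ℝ) - m j) * c j i) 0 * (t * a i))) := by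
                rw [Finset.abs_prod]
                refine Finset.prod_le_prod (fun i _ => abs_nonneg _) fun i _ => ?_
                exact exp_integral_Icc_le (mul_nonneg ht0.le (ha i).le)
          _ = (∏ i, (t * a i)) * Real.exp ((∑ i, max (∑ j, (2*((k j):ℝ) - m j) * c j i) 0 * a i) * t) := by
            rw [Finset.prod_mul_distrib, ← Real.exp_sum, Finset.sum_mul]
            congr 2
            refine Finset.sum_congr rfl fun i _ => by ring
          _ ≤ (∏ i, (t * a i)) * Real.exp (((∑ i, Ncoef i * a i) - η₂) * t) := by
            refine mul_le_mul_of_nonneg_left ?_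
              (Finset.prod_nonneg fun i _ => mul_nonneg ht0.le (ha i).le)
            exact Real.exp_le_exp.mpr (mul_le_mul_of_nonneg_right (hη₂le k hk) ht0.le)
          _ = (∏ i, a i) * t^r * Real.exp (((∑ i, Ncoef i * a i) - η₂) * t) := by
            rw [Finset.prod_mul_distrib, Finset.prod_const, Finset.card_univ, Fintype.card_fin]
            ring
      _ = (∑ k ∈ (Fintype.piFinset (fun j => Finset.range (m j + 1))).erase (fun j => m j), |(∏ j, ((-1:ℝ)^(k j + m j) * (((m j).choose (k j)):ℝ) / 2^(m j)))|) * (∏ i, a i) * t^r * Real.exp (((∑ i, Ncoef i * a i) - η₂) * t) := by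
        rw [← Finset.sum_mul]
        ring
  -- polynomial absorbed into exponential
  have hpowr : t^r ≤ (r.factorial : ℝ) * (2/η)^r * Real.exp (η/2 * t) := by
    have h1 : (η/2*t)^r / (r.factorial : ℝ) ≤ Real.exp (η/2*t) :=
      Real.pow_div_factorial_le_exp _ (by positivity) r
    have h2 : (η/2)^r * t^r ≤ (r.factorial : ℝ) * Real.exp (η/2*t) := by
      rw [← mul_pow]
      rw [div_le_iff₀ (by positivity : (0:ℝ) < (r.factorial : ℝ))] at h1
      linarith [h1]
    have h3 : t^r = (2/η)^r * ((η/2)^r * t^r) := by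
      rw [← mul_assoc, ← mul_pow]
      rw [show (2/η) * (η/2) = 1 by field_simp]
      rw [one_pow, one_mul]
    rw [h3]
    calc (2/η)^r * ((η/2)^r * t^r) ≤ (2/η)^r * ((r.factorial : ℝ) * Real.exp (η/2*t)) :=
        mul_le_mul_of_nonneg_left h2 (by positivity)
      _ = (r.factorial : ℝ) * (2/η)^r * Real.exp (η/2*t) := by ring
  -- final assembly
  have hexp1 : Real.exp (((∑ i, Ncoef i * a i) - b0) * t)
      ≤ Real.exp (((∑ i, Ncoef i * a i) - η/2) * t) := by
    apply Real.exp_le_exp.mpr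
    apply mul_le_mul_of_nonneg_right _ ht0.le
    have := min_le_left b0 η₂
    rw [← hη] at this
    linarith [hηpos]
  have hexp2 : Real.exp (η/2 * t) * Real.exp (((∑ i, Ncoef i * a i) - η₂) * t)
      ≤ Real.exp (((∑ i, Ncoef i * a i) - η/2) * t) := by
    rw [← Real.exp_add]
    apply Real.exp_le_exp.mpr
    have := min_le_right b0 η₂
    rw [← hη] at this
    nlinarith [hηpos, ht0]
  have habs : |(∏ j, ((1:ℝ)/2^(m j))) * (∏ i, (Ncoef i)⁻¹) * (∑ S ∈ Finset.univ.powerset.erase Finset.univ,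
          ((∏ i ∈ S, Real.exp (Ncoef i * a i * t)) * ∏ i ∈ Finset.univ \ S, (-1:ℝ))) + (∑ k ∈ (Fintype.piFinset (fun j => Finset.range (m j + 1))).erase (fun j => m j), (∏ j, ((-1:ℝ)^(k j + m j) * (((m j).choose (k j)):ℝ) / 2^(m j))) * (∏ i, ∫ x in Set.Icc (0:ℝ) (t * a i), Real.exp ((∑ j, (2*((k j):ℝ) - m j) * c j i) * x)))|
      ≤ |(∏ j, ((1:ℝ)/2^(m j))) * (∏ i, (Ncoef i)⁻¹) * (∑ S ∈ Finset.univ.powerset.erase Finset.univ,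
          ((∏ i ∈ S, Real.exp (Ncoef i * a i * t)) * ∏ i ∈ Finset.univ \ S, (-1:ℝ)))| + |(∑ k ∈ (Fintype.piFinset (fun j => Finset.range (m j + 1))).erase (fun j => m j), (∏ j, ((-1:ℝ)^(k j + m j) * (((m j).choose (k j)):ℝ) / 2^(m j))) * (∏ i, ∫ x in Set.Icc (0:ℝ) (t * a i), Real.exp ((∑ j, (2*((k j):ℝ) - m j) * c j i) * x)))| := abs_add_le _ _
  have hfinal2 : (∑ k ∈ (Fintype.piFinset (fun j => Finset.range (m j + 1))).erase (fun j => m j), |(∏ j, ((-1:ℝ)^(k j + m j) * (((m j).choose (k j)):ℝ) / 2^(m j)))|) * (∏ i, a i) * t^r * Real.exp (((∑ i, Ncoef i * a i) - η₂) * t)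
      ≤ (∑ k ∈ (Fintype.piFinset (fun j => Finset.range (m j + 1))).erase (fun j => m j), |(∏ j, ((-1:ℝ)^(k j + m j) * (((m j).choose (k j)):ℝ) / 2^(m j)))|) * (∏ i, a i) * (r.factorial : ℝ) * (2/η)^r
          * Real.exp (((∑ i, Ncoef i * a i) - η/2) * t) := by
    calc (∑ k ∈ (Fintype.piFinset (fun j => Finset.range (m j + 1))).erase (fun j => m j), |(∏ j, ((-1:ℝ)^(k j + m j) * (((m j).choose (k j)):ℝ) / 2^(m j)))|) * (∏ i, a i) * t^r * Real.exp (((∑ i, Ncoef i * a i) - η₂) * t)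
        ≤ (∑ k ∈ (Fintype.piFinset (fun j => Finset.range (m j + 1))).erase (fun j => m j), |(∏ j, ((-1:ℝ)^(k j + m j) * (((m j).choose (k j)):ℝ) / 2^(m j)))|) * (∏ i, a i) * ((r.factorial : ℝ) * (2/η)^r * Real.exp (η/2 * t))
            * Real.exp (((∑ i, Ncoef i * a i) - η₂) * t) := by
          refine mul_le_mul_of_nonneg_right
            (mul_le_mul_of_nonneg_left hpowr (mul_nonneg hSWnn hprodapos.le))
            (Real.exp_pos _).le
      _ = (∑ k ∈ (Fintype.piFinset (fun j => Finset.range (m j + 1))).erase (fun j => m j), |(∏ j, ((-1:ℝ)^(k j + m j) * (((m j).choose (k j)):ℝ) / 2^(m j)))|) * (∏ i, a i) * (r.factorial : ℝ) * (2/η)^r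
            * (Real.exp (η/2 * t) * Real.exp (((∑ i, Ncoef i * a i) - η₂) * t)) := by ring
      _ ≤ (∑ k ∈ (Fintype.piFinset (fun j => Finset.range (m j + 1))).erase (fun j => m j), |(∏ j, ((-1:ℝ)^(k j + m j) * (((m j).choose (k j)):ℝ) / 2^(m j)))|) * (∏ i, a i) * (r.factorial : ℝ) * (2/η)^r
            * Real.exp (((∑ i, Ncoef i * a i) - η/2) * t) := by
          refine mul_le_mul_of_nonneg_left hexp2 ?_
          positivity
  have hfinal1 : (∏ j, ((1:ℝ)/2^(m j))) * (∏ i, (Ncoef i)⁻¹) * (((Finset.univ.powerset.erase (Finset.univ : Finset (Fin r))).card : ℝ)) * Real.exp (((∑ i, Ncoef i * a i) - b0) * t)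
      ≤ (∏ j, ((1:ℝ)/2^(m j))) * (∏ i, (Ncoef i)⁻¹) * (((Finset.univ.powerset.erase (Finset.univ : Finset (Fin r))).card : ℝ)) * Real.exp (((∑ i, Ncoef i * a i) - η/2) * t) := by
    refine mul_le_mul_of_nonneg_left hexp1 ?_
    have : (0:ℝ) ≤ (((Finset.univ.powerset.erase (Finset.univ : Finset (Fin r))).card : ℝ)) := Nat.cast_nonneg _
    positivity
  calc cH * |(∏ j, ((1:ℝ)/2^(m j))) * (∏ i, (Ncoef i)⁻¹) * (∑ S ∈ Finset.univ.powerset.erase Finset.univ,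
          ((∏ i ∈ S, Real.exp (Ncoef i * a i * t)) * ∏ i ∈ Finset.univ \ S, (-1:ℝ))) + (∑ k ∈ (Fintype.piFinset (fun j => Finset.range (m j + 1))).erase (fun j => m j), (∏ j, ((-1:ℝ)^(k j + m j) * (((m j).choose (k j)):ℝ) / 2^(m j))) * (∏ i, ∫ x in Set.Icc (0:ℝ) (t * a i), Real.exp ((∑ j, (2*((k j):ℝ) - m j) * c j i) * x)))|
      ≤ cH * ((∏ j, ((1:ℝ)/2^(m j))) * (∏ i, (Ncoef i)⁻¹) * (((Finset.univ.powerset.erase (Finset.univ : Finset (Fin r))).card : ℝ)) * Real.exp (((∑ i, Ncoef i * a i) - η/2) * t)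
          + (∑ k ∈ (Fintype.piFinset (fun j => Finset.range (m j + 1))).erase (fun j => m j), |(∏ j, ((-1:ℝ)^(k j + m j) * (((m j).choose (k j)):ℝ) / 2^(m j)))|) * (∏ i, a i) * (r.factorial : ℝ) * (2/η)^r
              * Real.exp (((∑ i, Ncoef i * a i) - η/2) * t)) := by
        refine mul_le_mul_of_nonneg_left ?_ hcH.le
        calc |(∏ j, ((1:ℝ)/2^(m j))) * (∏ i, (Ncoef i)⁻¹) * (∑ S ∈ Finset.univ.powerset.erase Finset.univ,
          ((∏ i ∈ S, Real.exp (Ncoef i * a i * t)) * ∏ i ∈ Finset.univ \ S, (-1:ℝ))) + (∑ k ∈ (Fintype.piFinset (fun j => Finset.range (m j + 1))).erase (fun j => m j), (∏ j, ((-1:ℝ)^(k j + m j) * (((m j).choose (k j)):ℝ) / 2^(m j))) * (∏ i, ∫ x in Set.Icc (0:ℝ) (t * a i), Real.exp ((∑ j, (2*((k j):ℝ) - m j) * c j i) * x)))| ≤ |(∏ j, ((1:ℝ)/2^(m j))) * (∏ i, (Ncoef i)⁻¹) * (∑ S ∈ Finset.univ.powerset.erase Finset.univ,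
          ((∏ i ∈ S, Real.exp (Ncoef i * a i * t)) * ∏ i ∈ Finset.univ \ S, (-1:ℝ)))| + |(∑ k ∈ (Fintype.piFinset (fun j => Finset.range (m j + 1))).erase (fun j => m j), (∏ j, ((-1:ℝ)^(k j + m j) * (((m j).choose (k j)):ℝ) / 2^(m j))) * (∏ i, ∫ x in Set.Icc (0:ℝ) (t * a i), Real.exp ((∑ j, (2*((k j):ℝ) - m j) * c j i) * x)))| := habs
          _ ≤ _ := add_le_add (le_trans hE1 hfinal1) (le_trans hE2 hfinal2)
    _ = cH * ((∏ j, ((1:ℝ)/2^(m j))) * (∏ i, (Ncoef i)⁻¹) * (((Finset.univ.powerset.erase (Finset.univ : Finset (Fin r))).card : ℝ))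
          + (∑ k ∈ (Fintype.piFinset (fun j => Finset.range (m j + 1))).erase (fun j => m j), |(∏ j, ((-1:ℝ)^(k j + m j) * (((m j).choose (k j)):ℝ) / 2^(m j)))|) * (∏ i, a i) * (r.factorial : ℝ) * (2/η)^r)
          * Real.exp (((∑ i, Ncoef i * a i) - η/2) * t) := by ring
end

section
/- There exists a constant c > 0 such that for all t ≥ 1 and all ε ∈ (0, 1], one has V(t + ε) ≤ e^{cε} V(t), where V(t) := ∫_{C ∩ {Y : ‖Y‖ ≤ t}} ∏_{j=1}^{N} sinh(α_j(Y))^{m_j} dY. In other words, t ↦ log V(t) is uniformly locally Lipschitz on [1, ∞). -/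
open MeasureTheory Real Pointwise
set_option maxHeartbeats 1000000

section Aux

private lemma sinh_mul_le' {L x : ℝ} (hL : 1 ≤ L) (hx : 0 ≤ x) :
    Real.sinh (L * x) ≤ L * Real.exp (2 * ((L - 1) * x)) * Real.sinh x := by
  set δ := (L - 1) * x with hδdef
  have hδ : 0 ≤ δ := mul_nonneg (by linarith) hx
  have h1 : Real.sinh (L * x) = Real.sinh x * Real.cosh δ + Real.cosh x * Real.sinh δ := by
    have hsum : L * x = x + δ := by rw [hδdef]; ring
    rw [hsum, Real.sinh_add]
  have hcδ : Real.cosh δ ≤ Real.exp δ := by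
    rw [Real.cosh_eq]
    have := Real.exp_le_exp.mpr (neg_le_self hδ)
    linarith
  have hsδ : Real.sinh δ ≤ δ * Real.exp δ := by
    rw [Real.sinh_eq]
    have h2 := Real.add_one_le_exp (-(2 * δ))
    have h3 : Real.exp (-δ) = Real.exp δ * Real.exp (-(2 * δ)) := by
      rw [← Real.exp_add]; ring_nf
    have h4 := Real.exp_pos δ
    nlinarith
  have hxs : x ≤ Real.sinh x := Real.self_le_sinh_iff.mpr hx
  have hcx : Real.cosh x ≤ Real.sinh x + 1 := by
    have h5 : Real.exp (-x) ≤ 1 := by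
      simpa using Real.exp_le_exp.mpr (by linarith : -x ≤ (0:ℝ))
    rw [Real.cosh_eq, Real.sinh_eq]; linarith
  have h2δ : Real.exp (2 * δ) = Real.exp δ * Real.exp δ := by
    rw [← Real.exp_add]; ring_nf
  have h1δ : 1 + δ ≤ Real.exp δ := by have := Real.add_one_le_exp δ; linarith
  have hsx0 : 0 ≤ Real.sinh x := Real.sinh_nonneg_iff.mpr hx
  have hsδ0 : 0 ≤ Real.sinh δ := Real.sinh_nonneg_iff.mpr hδ
  have heδ : 1 ≤ Real.exp δ := Real.one_le_exp hδ
  have hδsx : δ ≤ (L - 1) * Real.sinh x := by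
    rw [hδdef]; exact mul_le_mul_of_nonneg_left hxs (by linarith)
  have hexp0 : 0 < Real.exp δ := Real.exp_pos δ
  have hcx0 : 0 < Real.cosh x := Real.cosh_pos x
  rw [h1]
  have key1 : Real.sinh x * Real.cosh δ ≤ Real.sinh x * Real.exp δ :=
    mul_le_mul_of_nonneg_left hcδ hsx0
  have key2 : Real.cosh x * Real.sinh δ ≤ (Real.sinh x + 1) * (δ * Real.exp δ) := by
    have := mul_le_mul hcx hsδ hsδ0 (by linarith)
    linarith
  have key3 : (Real.sinh x + 1) * (δ * Real.exp δ)
      ≤ Real.sinh x * (Real.exp δ - 1) * Real.exp δ + (L - 1) * Real.sinh x * Real.exp δ := by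
    have a1 : Real.sinh x * (δ * Real.exp δ) ≤ Real.sinh x * ((Real.exp δ - 1) * Real.exp δ) := by
      apply mul_le_mul_of_nonneg_left _ hsx0
      apply mul_le_mul_of_nonneg_right (by linarith) hexp0.le
    have a2 : 1 * (δ * Real.exp δ) ≤ (L - 1) * Real.sinh x * Real.exp δ := by
      rw [one_mul]
      exact mul_le_mul_of_nonneg_right hδsx hexp0.le
    nlinarith
  rw [h2δ]
  nlinarith [mul_le_mul_of_nonneg_right key1 (le_of_lt hexp0), mul_le_mul_of_nonneg_left heδ (mul_nonneg (mul_nonneg (by linarith : (0:ℝ) ≤ L - 1) hsx0) hexp0.le)]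

end Aux

/-- **Uniform local Lipschitz property of the logarithm of the Harish–Chandra ball volume.**
With `V(t) = ∫_{C ∩ {‖Y‖ ≤ t}} ∏ sinh(α_j Y)^{m_j} dY` over the simplicial cone
`C = {Y : βᵢ Y ≥ 0}`, there is a constant `c > 0` such that for all `t ≥ 1` and `ε ∈ (0,1]`,
`V(t+ε) ≤ e^{cε} V(t)`. -/
theorem ball_volume_log_locally_lipschitz
    (r : ℕ) (hr : 0 < r)
    (β : Module.Basis (Fin r) ℝ (Module.Dual ℝ (EuclideanSpace ℝ (Fin r))))
    (N : ℕ) (hN : 0 < N)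
    (α : Fin N → Module.Dual ℝ (EuclideanSpace ℝ (Fin r)))
    (hα0 : ∀ j, α j ≠ 0)
    (hαβ : ∀ j, ∃ c : Fin r → ℝ, (∀ i, 0 ≤ c i) ∧ α j = ∑ i, c i • (β i : Module.Dual ℝ (EuclideanSpace ℝ (Fin r))))
    (m : Fin N → ℕ) (hm : ∀ j, 0 < m j)
    (Ncoef : Fin r → ℝ) (hNcoef : ∀ i, 0 < Ncoef i)
    (h2ρ : (∑ j, (m j : ℝ) • α j) = ∑ i, Ncoef i • (β i : Module.Dual ℝ (EuclideanSpace ℝ (Fin r)))) :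
    ∃ c > (0 : ℝ), ∀ t : ℝ, 1 ≤ t → ∀ ε : ℝ, 0 < ε → ε ≤ 1 →
      (∫ Y in {Y : EuclideanSpace ℝ (Fin r) | (∀ i, 0 ≤ β i Y) ∧ ‖Y‖ ≤ t + ε},
          ∏ j, (Real.sinh (α j Y)) ^ (m j)) ≤
        Real.exp (c * ε) *
          ∫ Y in {Y : EuclideanSpace ℝ (Fin r) | (∀ i, 0 ≤ β i Y) ∧ ‖Y‖ ≤ t},
            ∏ j, (Real.sinh (α j Y)) ^ (m j) := by
  classical
  let A : Fin N → (EuclideanSpace ℝ (Fin r) →L[ℝ] ℝ) := fun j => LinearMap.toContinuousLinearMap (α j)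
  let K : ℝ := ∑ j, (m j : ℝ) * ‖A j‖
  have hK0 : 0 ≤ K := Finset.sum_nonneg fun j _ => mul_nonneg (Nat.cast_nonneg _) (norm_nonneg _)
  set M : ℕ := ∑ j, m j with hM
  refine ⟨(r : ℝ) + M + 2 * K + 1, by positivity, ?_⟩
  intro t ht ε hε hε1
  have ht0 : (0:ℝ) < t := lt_of_lt_of_le one_pos ht
  set F : EuclideanSpace ℝ (Fin r) → ℝ := fun Y => ∏ j, (Real.sinh (α j Y)) ^ (m j) with hF
  set L : ℝ := (t + ε) / t with hLdef
  have hL1 : 1 < L := by rw [hLdef, lt_div_iff₀ ht0]; linarith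
  have hL0 : 0 < L := by linarith
  have hLt : L * t = t + ε := by rw [hLdef]; field_simp
  set S : ℝ → Set (EuclideanSpace ℝ (Fin r)) := fun s => {Y | (∀ i, 0 ≤ β i Y) ∧ ‖Y‖ ≤ s} with hSdef
  -- positivity of α j on the cone
  have hαpos : ∀ (Y : EuclideanSpace ℝ (Fin r)), (∀ i, 0 ≤ β i Y) → ∀ j, 0 ≤ α j Y := by
    intro Y hY j
    obtain ⟨cc, hcc, hrep⟩ := hαβ j
    rw [hrep]
    simp only [LinearMap.coe_sum, Finset.sum_apply, LinearMap.smul_apply, smul_eq_mul]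
    exact Finset.sum_nonneg fun i _ => mul_nonneg (hcc i) (hY i)
  -- scaling of the set
  have hscale : S (t + ε) = L • S t := by
    ext Y
    rw [Set.mem_smul_set_iff_inv_smul_mem₀ hL0.ne']
    have hinv : (0:ℝ) < L⁻¹ := inv_pos.mpr hL0
    simp only [hSdef, Set.mem_setOf_eq, _root_.map_smul, smul_eq_mul, norm_smul, Real.norm_eq_abs,
      abs_of_pos hinv]
    constructor
    · rintro ⟨h1, h2⟩
      refine ⟨fun i => mul_nonneg hinv.le (h1 i), ?_⟩
      rw [← hLt] at h2
      calc L⁻¹ * ‖Y‖ ≤ L⁻¹ * (L * t) := by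
            exact mul_le_mul_of_nonneg_left h2 hinv.le
        _ = t := by field_simp
    · rintro ⟨h1, h2⟩
      constructor
      · intro i
        have := h1 i
        nlinarith [this]
      · rw [← hLt]
        calc ‖Y‖ = L * (L⁻¹ * ‖Y‖) := by field_simp
          _ ≤ L * t := mul_le_mul_of_nonneg_left h2 hL0.le
  -- basic topology of S t
  have hβcont : ∀ i, Continuous fun Y : EuclideanSpace ℝ (Fin r) => β i Y := fun i =>
    LinearMap.continuous_of_finiteDimensional (β i)
  have hclosed : IsClosed (S t) := by
    have : S t = (⋂ i, {Y : EuclideanSpace ℝ (Fin r) | 0 ≤ β i Y}) ∩ Metric.closedBall 0 t := by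
      ext Y
      simp [hSdef, Set.mem_iInter, mem_closedBall_zero_iff]
    rw [this]
    exact (isClosed_iInter fun i => isClosed_le continuous_const (hβcont i)).inter
      Metric.isClosed_closedBall
  have hbdd : Bornology.IsBounded (S t) := by
    apply (Metric.isBounded_closedBall (x := (0:EuclideanSpace ℝ (Fin r))) (r := t)).subset
    intro Y hY
    exact mem_closedBall_zero_iff.mpr hY.2
  have hcompact : IsCompact (S t) := Metric.isCompact_of_isClosed_isBounded hclosed hbdd
  have hmeas : MeasurableSet (S t) := hclosed.measurableSet
  have hFcont : Continuous F := by
    apply continuous_finset_prod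
    intro j _
    exact (Real.continuous_sinh.comp (LinearMap.continuous_of_finiteDimensional (α j))).pow _
  -- change of variables
  have hd : Module.finrank ℝ (EuclideanSpace ℝ (Fin r)) = r := finrank_euclideanSpace_fin
  have hCV := MeasureTheory.Measure.setIntegral_comp_smul_of_pos (volume) F (S t) hL0
  rw [hd] at hCV
  have hLr : (0:ℝ) < L ^ r := pow_pos hL0 r
  have hint1 : (∫ Y in S (t + ε), F Y) = L ^ r * ∫ Y in S t, F (L • Y) := by
    rw [hscale, hCV, smul_eq_mul, ← mul_assoc, mul_inv_cancel₀ hLr.ne', one_mul]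
  -- pointwise bound on S t
  have hpoint : ∀ Y ∈ S t, F (L • Y) ≤ Real.exp (((M:ℝ) + 2 * K) * ε) * F Y := by
    intro Y hY
    obtain ⟨hYc, hYn⟩ := hY
    have hx : ∀ j, 0 ≤ α j Y := hαpos Y hYc
    have hFs : F (L • Y) = ∏ j, (Real.sinh (L * α j Y)) ^ (m j) := by
      simp only [hF, _root_.map_smul, smul_eq_mul]
    rw [hFs]
    have step1 : ∏ j, (Real.sinh (L * α j Y)) ^ (m j)
        ≤ ∏ j, (L * Real.exp (2 * ((L - 1) * α j Y)) * Real.sinh (α j Y)) ^ (m j) := by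
      apply Finset.prod_le_prod
      · intro j _
        exact pow_nonneg (Real.sinh_nonneg_iff.mpr (mul_nonneg hL0.le (hx j))) _
      · intro j _
        exact pow_le_pow_left₀ (Real.sinh_nonneg_iff.mpr (mul_nonneg hL0.le (hx j)))
          (sinh_mul_le' hL1.le (hx j)) _
    have step2 : ∏ j, (L * Real.exp (2 * ((L - 1) * α j Y)) * Real.sinh (α j Y)) ^ (m j)
        = L ^ M * Real.exp (∑ j, (m j : ℝ) * (2 * ((L - 1) * α j Y))) * F Y := by
      simp only [mul_pow]
      rw [Finset.prod_mul_distrib, Finset.prod_mul_distrib, Finset.prod_pow_eq_pow_sum]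
      congr 1
      congr 1
      rw [Real.exp_sum]
      apply Finset.prod_congr rfl
      intro j _
      rw [← Real.exp_nat_mul]
    rw [step2] at step1
    refine le_trans step1 ?_
    have hFY0 : 0 ≤ F Y := Finset.prod_nonneg fun j _ =>
      pow_nonneg (Real.sinh_nonneg_iff.mpr (hx j)) _
    apply mul_le_mul_of_nonneg_right _ hFY0
    -- L ^ M * exp(...) ≤ exp ((M + 2K) ε)
    have hLe : L ≤ Real.exp ε := by
      have h1 : L ≤ 1 + ε := by
        rw [hLdef, div_le_iff₀ ht0]; nlinarith
      have h2 : 1 + ε ≤ Real.exp ε := by have := Real.add_one_le_exp ε; linarith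
      linarith
    have hLM : L ^ M ≤ Real.exp ((M : ℝ) * ε) := by
      calc L ^ M ≤ (Real.exp ε) ^ M := pow_le_pow_left₀ hL0.le hLe M
        _ = Real.exp ((M : ℝ) * ε) := (Real.exp_nat_mul ε M).symm
    have hsum : (∑ j, (m j : ℝ) * (2 * ((L - 1) * α j Y))) ≤ 2 * K * ε := by
      have heach : ∀ j, (m j : ℝ) * α j Y ≤ (m j : ℝ) * (‖A j‖ * t) := by
        intro j
        apply mul_le_mul_of_nonneg_left _ (Nat.cast_nonneg _)
        have h1 : α j Y ≤ |α j Y| := le_abs_self _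
        have h2 : |(A j) Y| ≤ ‖A j‖ * ‖Y‖ := by
          simpa using (A j).le_opNorm Y
        have h3 : (A j) Y = α j Y := rfl
        rw [h3] at h2
        have h4 : ‖A j‖ * ‖Y‖ ≤ ‖A j‖ * t := mul_le_mul_of_nonneg_left hYn (norm_nonneg _)
        linarith
      have hsum2 : (∑ j, (m j : ℝ) * α j Y) ≤ K * t := by
        calc (∑ j, (m j : ℝ) * α j Y) ≤ ∑ j, (m j : ℝ) * (‖A j‖ * t) :=
              Finset.sum_le_sum fun j _ => heach j
          _ = K * t := by rw [Finset.sum_mul]; apply Finset.sum_congr rfl; intro j _; ring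
      have hLt' : (L - 1) * t = ε := by rw [hLdef]; field_simp; ring
      have hrw : (∑ j, (m j : ℝ) * (2 * ((L - 1) * α j Y)))
          = 2 * (L - 1) * (∑ j, (m j : ℝ) * α j Y) := by
        rw [Finset.mul_sum]; apply Finset.sum_congr rfl; intro j _; ring
      rw [hrw]
      have hL10 : 0 ≤ L - 1 := by linarith
      calc 2 * (L - 1) * (∑ j, (m j : ℝ) * α j Y) ≤ 2 * (L - 1) * (K * t) := by
            apply mul_le_mul_of_nonneg_left hsum2 (by linarith)
        _ = 2 * K * ((L - 1) * t) := by ring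
        _ = 2 * K * ε := by rw [hLt']
    calc L ^ M * Real.exp (∑ j, (m j : ℝ) * (2 * ((L - 1) * α j Y)))
        ≤ Real.exp ((M : ℝ) * ε) * Real.exp (2 * K * ε) := by
          apply mul_le_mul hLM (Real.exp_le_exp.mpr hsum) (Real.exp_pos _).le (Real.exp_pos _).le
      _ = Real.exp (((M : ℝ) + 2 * K) * ε) := by rw [← Real.exp_add]; ring_nf
  -- integrability
  have hInt1 : IntegrableOn (fun Y => F (L • Y)) (S t) := by
    exact (hFcont.comp (continuous_const_smul L)).continuousOn.integrableOn_compact hcompact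
  have hInt2 : IntegrableOn (fun Y => Real.exp (((M:ℝ) + 2 * K) * ε) * F Y) (S t) := by
    exact (continuous_const.mul hFcont).continuousOn.integrableOn_compact hcompact
  have hmono : (∫ Y in S t, F (L • Y)) ≤ ∫ Y in S t, Real.exp (((M:ℝ) + 2 * K) * ε) * F Y :=
    setIntegral_mono_on hInt1 hInt2 hmeas hpoint
  have hVnonneg : 0 ≤ ∫ Y in S t, F Y := by
    apply setIntegral_nonneg hmeas
    intro Y hY
    exact Finset.prod_nonneg fun j _ =>
      pow_nonneg (Real.sinh_nonneg_iff.mpr (hαpos Y hY.1 j)) _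
  have hLrle : L ^ r ≤ Real.exp ((r:ℝ) * ε) := by
    have hLe : L ≤ Real.exp ε := by
      have h1 : L ≤ 1 + ε := by rw [hLdef, div_le_iff₀ ht0]; nlinarith
      have h2 : 1 + ε ≤ Real.exp ε := by have := Real.add_one_le_exp ε; linarith
      linarith
    calc L ^ r ≤ (Real.exp ε) ^ r := pow_le_pow_left₀ hL0.le hLe r
      _ = Real.exp ((r:ℝ) * ε) := (Real.exp_nat_mul ε r).symm
  -- assemble
  show (∫ Y in S (t + ε), F Y) ≤ Real.exp (((r : ℝ) + M + 2 * K + 1) * ε) * ∫ Y in S t, F Y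
  rw [hint1]
  calc L ^ r * ∫ Y in S t, F (L • Y)
      ≤ L ^ r * ∫ Y in S t, Real.exp (((M:ℝ) + 2 * K) * ε) * F Y :=
        mul_le_mul_of_nonneg_left hmono hLr.le
    _ = L ^ r * (Real.exp (((M:ℝ) + 2 * K) * ε) * ∫ Y in S t, F Y) := by
        rw [integral_const_mul]
    _ ≤ Real.exp ((r:ℝ) * ε) * (Real.exp (((M:ℝ) + 2 * K) * ε) * ∫ Y in S t, F Y) := by
        apply mul_le_mul_of_nonneg_right hLrle
        exact mul_nonneg (Real.exp_pos _).le hVnonneg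
    _ = Real.exp (((r:ℝ) + M + 2 * K) * ε) * ∫ Y in S t, F Y := by
        rw [← mul_assoc, ← Real.exp_add]; ring_nf
    _ ≤ Real.exp (((r : ℝ) + M + 2 * K + 1) * ε) * ∫ Y in S t, F Y := by
        apply mul_le_mul_of_nonneg_right _ hVnonneg
        apply Real.exp_le_exp.mpr
        nlinarith
end

section
/- Assume in addition that the maximum of ρ over the closed unit ball of ℝ^r is attained at a point u with β_i(u) > 0 for every i, and set δ₀ := 2 max_{‖Y‖ ≤ 1} ρ(Y). Then there exists ε_D > 0 such that for every ε ∈ (0, ε_D) there are constants κ(ε) > 0 and C(ε) ≥ 0 with: for all t ≥ 1, ∫_{{Y ∈ C : ‖Y‖ ≤ t and dist(Y, ∂C) ≤ εt}} e^{2ρ(Y)} dY ≤ C(ε) t^r e^{(δ₀ − κ(ε)) t}, where ∂C denotes the topological frontier of C. (Consequently the volume of the set of almost-singular directions in the ball domain is exponentially smaller than e^{δ₀ t}.) -/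
set_option maxHeartbeats 1000000

open MeasureTheory Real

/-- **Volume estimate for almost-singular Cartan projections.**
With `2ρ = Σ m_j α_j` maximized on the closed unit ball at a regular point `u`
(`βᵢ u > 0` for all `i`), and `δ₀ = 2 max_{‖Y‖≤1} ρ(Y) = (2ρ)(u)`, there is `ε_D > 0` such that
for every `ε ∈ (0, ε_D)` there are `κ(ε) > 0` and `C(ε) ≥ 0` with
`∫_{{Y ∈ C : ‖Y‖ ≤ t, dist(Y,∂C) ≤ εt}} e^{2ρ(Y)} dY ≤ C(ε) t^r e^{(δ₀ - κ(ε)) t}` for all `t ≥ 1`. -/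
theorem almost_singular_volume_estimate
    (r : ℕ) (hr : 0 < r)
    (β : Module.Basis (Fin r) ℝ (Module.Dual ℝ (EuclideanSpace ℝ (Fin r))))
    (N : ℕ) (hN : 0 < N)
    (α : Fin N → Module.Dual ℝ (EuclideanSpace ℝ (Fin r)))
    (hα0 : ∀ j, α j ≠ 0)
    (hαβ : ∀ j, ∃ c : Fin r → ℝ, (∀ i, 0 ≤ c i) ∧ α j = ∑ i, c i • (β i : Module.Dual ℝ (EuclideanSpace ℝ (Fin r))))
    (m : Fin N → ℕ) (hm : ∀ j, 0 < m j)
    (Ncoef : Fin r → ℝ) (hNcoef : ∀ i, 0 < Ncoef i)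
    (h2ρ : (∑ j, (m j : ℝ) • α j) = ∑ i, Ncoef i • (β i : Module.Dual ℝ (EuclideanSpace ℝ (Fin r))))
    (u : EuclideanSpace ℝ (Fin r)) (hu : ‖u‖ ≤ 1) (hureg : ∀ i, 0 < β i u)
    (humax : ∀ Y : EuclideanSpace ℝ (Fin r), ‖Y‖ ≤ 1 →
      (∑ j, (m j : ℝ) * α j Y) ≤ ∑ j, (m j : ℝ) * α j u) :
    ∃ εD > (0 : ℝ), ∀ ε : ℝ, 0 < ε → ε < εD →
      ∃ κ > (0 : ℝ), ∃ C ≥ (0 : ℝ), ∀ t : ℝ, 1 ≤ t →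
        (∫ Y in {Y : EuclideanSpace ℝ (Fin r) | (∀ i, 0 ≤ β i Y) ∧ ‖Y‖ ≤ t ∧
              Metric.infDist Y (frontier {Z : EuclideanSpace ℝ (Fin r) | ∀ i, 0 ≤ β i Z}) ≤ ε * t},
            Real.exp (∑ j, (m j : ℝ) * α j Y)) ≤
          C * t ^ r * Real.exp (((∑ j, (m j : ℝ) * α j u) - κ) * t) := by
  classical
  haveI : Nonempty (Fin r) := Fin.pos_iff_nonempty.mp hr
  -- the linear functional f = 2ρ
  set f : Module.Dual ℝ (EuclideanSpace ℝ (Fin r)) := ∑ j, (m j : ℝ) • α j with hf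
  have hfapp : ∀ Y : EuclideanSpace ℝ (Fin r), f Y = ∑ j, (m j : ℝ) * α j Y := by
    intro Y
    simp [hf, LinearMap.sum_apply, LinearMap.smul_apply, smul_eq_mul]
  have hfcont : Continuous f := f.continuous_of_finiteDimensional
  have hfu : 0 < f u := by
    rw [h2ρ]
    simp only [LinearMap.sum_apply, LinearMap.smul_apply, smul_eq_mul]
    exact Finset.sum_pos (fun i _ => mul_pos (hNcoef i) (hureg i)) Finset.univ_nonempty
  have hmax : ∀ Y : EuclideanSpace ℝ (Fin r), ‖Y‖ ≤ 1 → f Y ≤ f u := by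
    intro Y hY; rw [hfapp, hfapp]; exact humax Y hY
  -- the cone
  set Cs : Set (EuclideanSpace ℝ (Fin r)) := {Z : EuclideanSpace ℝ (Fin r) | ∀ i, 0 ≤ β i Z} with hCs
  have hβcont : ∀ i, Continuous (β i) := fun i => (β i).continuous_of_finiteDimensional
  -- frontier is stable under positive scaling
  have hCsClosed : IsClosed Cs := by
    have : Cs = ⋂ i, {Z : EuclideanSpace ℝ (Fin r) | 0 ≤ β i Z} := by ext x; simp [hCs]
    rw [this]
    exact isClosed_iInter fun i => isClosed_le continuous_const (hβcont i)
  have hmemCs : ∀ c : ℝ, 0 ≤ c → ∀ Z ∈ Cs, c • Z ∈ Cs := by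
    intro c hc Z hZ i
    rw [_root_.map_smul, smul_eq_mul]
    exact mul_nonneg hc (hZ i)
  have hFr : ∀ c : ℝ, 0 < c → ∀ Z : EuclideanSpace ℝ (Fin r),
      Z ∈ frontier Cs → c • Z ∈ frontier Cs := by
    intro c hc Z hZ
    rw [frontier, hCsClosed.closure_eq] at hZ ⊢
    refine ⟨hmemCs c hc.le Z hZ.1, fun hint => hZ.2 ?_⟩
    obtain ⟨δ, hδ, hball⟩ := Metric.mem_nhds_iff.mp (mem_interior_iff_mem_nhds.mp hint)
    rw [mem_interior_iff_mem_nhds, Metric.mem_nhds_iff]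
    refine ⟨δ / c, by positivity, fun x hx => ?_⟩
    have hcx : c • x ∈ Metric.ball (c • Z) δ := by
      rw [Metric.mem_ball] at hx ⊢
      calc dist (c • x) (c • Z) = ‖c‖ * dist x Z := dist_smul₀ c x Z
        _ = c * dist x Z := by rw [Real.norm_eq_abs, abs_of_pos hc]
        _ < c * (δ / c) := by
            have := dist_nonneg (x := x) (y := Z)
            nlinarith
        _ = δ := by field_simp
    have hmem := hball hcx
    intro i
    have h2 : 0 ≤ c * β i x := by
      have := hmem i
      rwa [_root_.map_smul, smul_eq_mul] at this
    have h3 := mul_nonneg (inv_nonneg.mpr hc.le) h2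
    rwa [← mul_assoc, inv_mul_cancel₀ hc.ne', one_mul] at h3
  -- 0 is in the frontier
  have h0Cs : (0 : EuclideanSpace ℝ (Fin r)) ∈ Cs := fun i => by simp
  have h0F : (0 : EuclideanSpace ℝ (Fin r)) ∈ frontier Cs := by
    refine ⟨subset_closure h0Cs, ?_⟩
    intro h0int
    obtain ⟨δ, hδ, hball⟩ := Metric.mem_nhds_iff.mp (mem_interior_iff_mem_nhds.mp h0int)
    -- find a vector where β i0 is negative
    set i0 : Fin r := ⟨0, hr⟩
    have hβ0 : (β i0 : Module.Dual ℝ (EuclideanSpace ℝ (Fin r))) ≠ 0 := β.ne_zero i0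
    obtain ⟨w, hw⟩ : ∃ w : EuclideanSpace ℝ (Fin r), β i0 w ≠ 0 := by
      by_contra h
      push_neg at h
      exact hβ0 (LinearMap.ext fun x => by simpa using h x)
    set w' : EuclideanSpace ℝ (Fin r) := (-(β i0 w)⁻¹) • w with hw'
    have hw'val : β i0 w' = -1 := by
      simp only [hw', _root_.map_smul, smul_eq_mul]
      field_simp
    have hw'ne : w' ≠ 0 := fun h => by simp [h] at hw'val
    have hnw' : 0 < ‖w'‖ := norm_pos_iff.mpr hw'ne
    set x : EuclideanSpace ℝ (Fin r) := (δ / 2) • (‖w'‖⁻¹ • w') with hx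
    have hxball : x ∈ Metric.ball (0 : EuclideanSpace ℝ (Fin r)) δ := by
      simp only [Metric.mem_ball, dist_zero_right, hx, norm_smul, Real.norm_eq_abs]
      rw [abs_of_pos (by positivity : (0:ℝ) < δ / 2), abs_of_pos (inv_pos.mpr hnw'),
        inv_mul_cancel₀ hnw'.ne', mul_one]
      linarith
    have hxCs := hball hxball i0
    rw [hx, _root_.map_smul, _root_.map_smul, smul_eq_mul, smul_eq_mul, hw'val] at hxCs
    nlinarith [inv_pos.mpr hnw']
  have hFne : (frontier Cs).Nonempty := ⟨0, h0F⟩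
  -- u is interior, so at positive distance from the frontier
  have huint : u ∈ interior Cs := by
    have hopen : IsOpen {Z : EuclideanSpace ℝ (Fin r) | ∀ i, 0 < β i Z} := by
      have : {Z : EuclideanSpace ℝ (Fin r) | ∀ i, 0 < β i Z} = ⋂ i, {Z : EuclideanSpace ℝ (Fin r) | 0 < β i Z} := by
        ext x; simp
      rw [this]
      exact isOpen_iInter_of_finite fun i => isOpen_lt continuous_const (hβcont i)
    have hsub : {Z : EuclideanSpace ℝ (Fin r) | ∀ i, 0 < β i Z} ⊆ Cs :=
      fun Z hZ i => (hZ i).le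
    exact interior_maximal hsub hopen hureg
  have huF : u ∉ frontier Cs := fun h => h.2 huint
  have hd : 0 < Metric.infDist u (frontier Cs) :=
    (IsClosed.notMem_iff_infDist_pos isClosed_frontier hFne).mp huF
  -- Riesz vector for f and uniqueness of the maximizer
  set v : EuclideanSpace ℝ (Fin r) := (InnerProductSpace.toDual ℝ (EuclideanSpace ℝ (Fin r))).symm (LinearMap.toContinuousLinearMap f) with hv
  have hvinner : ∀ x : EuclideanSpace ℝ (Fin r), (inner ℝ v x : ℝ) = f x := by
    intro x
    rw [hv, InnerProductSpace.toDual_symm_apply]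
    simp
  have hvne : v ≠ 0 := by
    intro h
    rw [← hvinner u, h] at hfu
    simp at hfu
  have hvnorm : 0 < ‖v‖ := norm_pos_iff.mpr hvne
  have hfvnorm : f u = ‖v‖ := by
    have h1 : f u ≤ ‖v‖ := by
      rw [← hvinner u]
      calc (inner ℝ v u : ℝ) ≤ ‖v‖ * ‖u‖ := real_inner_le_norm v u
        _ ≤ ‖v‖ * 1 := by nlinarith
        _ = ‖v‖ := mul_one _
    have h2 : ‖v‖ ≤ f u := by
      have hn : ‖(‖v‖⁻¹ • v : EuclideanSpace ℝ (Fin r))‖ ≤ 1 := by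
        rw [norm_smul, Real.norm_eq_abs, abs_of_pos (inv_pos.mpr hvnorm)]
        rw [inv_mul_cancel₀ hvnorm.ne']
      have := hmax _ hn
      rw [← hvinner (‖v‖⁻¹ • v), real_inner_smul_right, real_inner_self_eq_norm_mul_norm] at this
      calc ‖v‖ = ‖v‖⁻¹ * (‖v‖ * ‖v‖) := by field_simp
        _ ≤ f u := this
    linarith
  have huniq : ∀ y : EuclideanSpace ℝ (Fin r), ‖y‖ ≤ 1 → f y = f u → y = ‖v‖⁻¹ • v := by
    intro y hy hfy
    have hiy : (inner ℝ v y : ℝ) = ‖v‖ := by rw [hvinner, hfy, hfvnorm]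
    have hy1 : ‖y‖ = 1 := by
      have := real_inner_le_norm v y
      rw [hiy] at this
      have h1 : 1 ≤ ‖y‖ := by
        nlinarith
      linarith
    have heq : (inner ℝ v y : ℝ) = ‖v‖ * ‖y‖ := by rw [hiy, hy1, mul_one]
    have hvy := inner_eq_norm_mul_iff_real.mp heq
    rw [hy1, one_smul] at hvy
    calc y = ‖v‖⁻¹ • (‖v‖ • y) := by
          rw [smul_smul, inv_mul_cancel₀ hvnorm.ne', one_smul]
      _ = ‖v‖⁻¹ • v := by rw [← hvy]
  have huv : u = ‖v‖⁻¹ • v := huniq u hu rfl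
  -- main statement
  refine ⟨Metric.infDist u (frontier Cs), hd, ?_⟩
  intro ε hε hεd
  -- compact set of ε-almost-singular directions in the unit ball
  set K : Set (EuclideanSpace ℝ (Fin r)) := {y : EuclideanSpace ℝ (Fin r) | y ∈ Cs ∧ ‖y‖ ≤ 1 ∧ Metric.infDist y (frontier Cs) ≤ ε} with hK
  have hKclosed : IsClosed K := by
    have h1 : IsClosed Cs := by
      have : Cs = ⋂ i, {Z : EuclideanSpace ℝ (Fin r) | 0 ≤ β i Z} := by ext x; simp [hCs]
      rw [this]
      exact isClosed_iInter fun i => isClosed_le continuous_const (hβcont i)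
    have h2 : IsClosed {y : EuclideanSpace ℝ (Fin r) | ‖y‖ ≤ 1} := isClosed_le continuous_norm continuous_const
    have h3 : IsClosed {y : EuclideanSpace ℝ (Fin r) | Metric.infDist y (frontier Cs) ≤ ε} :=
      isClosed_le (Metric.continuous_infDist_pt _) continuous_const
    have hKeq : K = Cs ∩ ({y : EuclideanSpace ℝ (Fin r) | ‖y‖ ≤ 1} ∩ {y : EuclideanSpace ℝ (Fin r) | Metric.infDist y (frontier Cs) ≤ ε}) := by
      ext x; constructor
      · intro hx; exact ⟨hx.1, hx.2.1, hx.2.2⟩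
      · intro hx; exact ⟨hx.1, hx.2.1, hx.2.2⟩
    rw [hKeq]
    exact h1.inter (h2.inter h3)
  have hKcompact : IsCompact K := Metric.isCompact_of_isClosed_isBounded hKclosed
    (Bornology.IsBounded.subset (Metric.isBounded_closedBall (x := (0 : EuclideanSpace ℝ (Fin r))) (r := 1))
      (fun y hy => mem_closedBall_zero_iff.mpr hy.2.1))
  have hKne : K.Nonempty := ⟨0, h0Cs, by simp, by
    rw [Metric.infDist_zero_of_mem h0F]; exact hε.le⟩
  obtain ⟨y₀, hy₀K, hy₀max⟩ := hKcompact.exists_isMaxOn hKne hfcont.continuousOn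
  -- strict gap
  have hy₀lt : f y₀ < f u := by
    rcases lt_or_eq_of_le (hmax y₀ hy₀K.2.1) with h | h
    · exact h
    · exfalso
      have : y₀ = u := by rw [huniq y₀ hy₀K.2.1 h, ← huv]
      rw [this] at hy₀K
      exact absurd hy₀K.2.2 (not_le.mpr hεd)
  refine ⟨f u - f y₀, by linarith, (volume (Metric.ball (0 : EuclideanSpace ℝ (Fin r)) 1)).toReal,
    ENNReal.toReal_nonneg, ?_⟩
  intro t ht
  have ht0 : (0 : ℝ) < t := lt_of_lt_of_le one_pos ht
  set S : Set (EuclideanSpace ℝ (Fin r)) := {Y : EuclideanSpace ℝ (Fin r) | (∀ i, 0 ≤ β i Y) ∧ ‖Y‖ ≤ t ∧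
      Metric.infDist Y (frontier Cs) ≤ ε * t} with hS
  -- pointwise bound on S
  have hpoint : ∀ Y ∈ S, f Y ≤ (f u - (f u - f y₀)) * t := by
    intro Y hY
    set y : EuclideanSpace ℝ (Fin r) := t⁻¹ • Y with hy
    have hyK : y ∈ K := by
      refine ⟨fun i => ?_, ?_, ?_⟩
      · rw [hy, _root_.map_smul, smul_eq_mul]
        exact mul_nonneg (inv_pos.mpr ht0).le (hY.1 i)
      · rw [hy, norm_smul, Real.norm_eq_abs, abs_of_pos (inv_pos.mpr ht0)]
        calc t⁻¹ * ‖Y‖ ≤ t⁻¹ * t := by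
              have := hY.2.1
              nlinarith [inv_pos.mpr ht0]
          _ = 1 := inv_mul_cancel₀ ht0.ne'
      · -- infDist y F ≤ ε
        refine le_of_forall_pos_le_add fun δ hδ => ?_
        have h1 : Metric.infDist Y (frontier Cs) < ε * t + t * δ := by
          have := hY.2.2
          nlinarith
        obtain ⟨z, hzF, hzd⟩ := (Metric.infDist_lt_iff hFne).mp h1
        have hz' : t⁻¹ • z ∈ frontier Cs := hFr t⁻¹ (inv_pos.mpr ht0) z hzF
        calc Metric.infDist y (frontier Cs) ≤ dist y (t⁻¹ • z) :=
              Metric.infDist_le_dist_of_mem hz'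
          _ = ‖t⁻¹‖ * dist Y z := by rw [hy, dist_smul₀]
          _ = t⁻¹ * dist Y z := by rw [Real.norm_eq_abs, abs_of_pos (inv_pos.mpr ht0)]
          _ ≤ t⁻¹ * (ε * t + t * δ) := by
              have h2 : (0:ℝ) ≤ t⁻¹ := (inv_pos.mpr ht0).le
              nlinarith
          _ = ε + δ := by field_simp
    have h3 : f y ≤ f y₀ := hy₀max hyK
    have h4 : f y = t⁻¹ * f Y := by rw [hy, _root_.map_smul, smul_eq_mul]
    have : t⁻¹ * f Y ≤ f y₀ := by rw [← h4]; exact h3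
    calc f Y = t * (t⁻¹ * f Y) := by field_simp
      _ ≤ t * f y₀ := by nlinarith
      _ = (f u - (f u - f y₀)) * t := by ring
  -- measure bound
  have hμball : volume (Metric.closedBall (0 : EuclideanSpace ℝ (Fin r)) t) =
      ENNReal.ofReal (t ^ r) * volume (Metric.ball (0 : EuclideanSpace ℝ (Fin r)) 1) := by
    rw [Measure.addHaar_closedBall volume (0 : EuclideanSpace ℝ (Fin r)) ht0.le, finrank_euclideanSpace_fin]
  have hμS : volume S ≤ ENNReal.ofReal (t ^ r) * volume (Metric.ball (0 : EuclideanSpace ℝ (Fin r)) 1) := by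
    rw [← hμball]
    exact measure_mono fun Y hY => mem_closedBall_zero_iff.mpr hY.2.1
  have hμSfin : volume S < ⊤ :=
    lt_of_le_of_lt hμS (ENNReal.mul_lt_top ENNReal.ofReal_lt_top measure_ball_lt_top)
  -- integral bound
  have hbound : ∀ Y ∈ S, ‖Real.exp (∑ j, (m j : ℝ) * α j Y)‖ ≤
      Real.exp ((f u - (f u - f y₀)) * t) := by
    intro Y hY
    rw [Real.norm_of_nonneg (Real.exp_nonneg _), Real.exp_le_exp, ← hfapp]
    exact hpoint Y hY
  have hmainint := MeasureTheory.norm_setIntegral_le_of_norm_le_const hμSfin hbound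
  have hle1 : (∫ Y in S, Real.exp (∑ j, (m j : ℝ) * α j Y)) ≤
      Real.exp ((f u - (f u - f y₀)) * t) * (volume S).toReal :=
    le_trans (le_abs_self _) hmainint
  have hle2 : (volume S).toReal ≤ t ^ r * (volume (Metric.ball (0 : EuclideanSpace ℝ (Fin r)) 1)).toReal := by
    have := ENNReal.toReal_mono
      (ENNReal.mul_lt_top ENNReal.ofReal_lt_top measure_ball_lt_top).ne hμS
    rwa [ENNReal.toReal_mul, ENNReal.toReal_ofReal (by positivity : (0:ℝ) ≤ t ^ r)] at this
  have hfinal : (∫ Y in S, Real.exp (∑ j, (m j : ℝ) * α j Y)) ≤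
      (volume (Metric.ball (0 : EuclideanSpace ℝ (Fin r)) 1)).toReal * t ^ r *
        Real.exp ((f u - (f u - f y₀)) * t) := by
    calc (∫ Y in S, Real.exp (∑ j, (m j : ℝ) * α j Y))
        ≤ Real.exp ((f u - (f u - f y₀)) * t) * (volume S).toReal := hle1
      _ ≤ Real.exp ((f u - (f u - f y₀)) * t) *
          (t ^ r * (volume (Metric.ball (0 : EuclideanSpace ℝ (Fin r)) 1)).toReal) := by
          nlinarith [Real.exp_pos ((f u - (f u - f y₀)) * t), hle2,
            ENNReal.toReal_nonneg (a := volume S)]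
      _ = (volume (Metric.ball (0 : EuclideanSpace ℝ (Fin r)) 1)).toReal * t ^ r *
          Real.exp ((f u - (f u - f y₀)) * t) := by ring
  rw [← hfapp u]
  exact hfinal
end

section
/- Let T : V → V be a self-adjoint linear map, let v⁺ ∈ V be a unit eigenvector of T with eigenvalue λ₁ > 0, and suppose there is λ₂ ≥ 0 with ‖T w‖ ≤ λ₂ ‖w‖ for every w orthogonal to v⁺. Let 0 < ε ≤ 1 and assume the eigenvalue gap λ₂ / λ₁ < ε². Then for every nonzero v ∈ V with cos∠(v, v⁺) ≥ ε, the vector T v is nonzero and sin∠(T v, v⁺) < ε. (That is, T maps the complement of the ε-neighbourhood of the hyperplane (v⁺)^⊥ in projective space into the ball of radius ε around the line ℝ v⁺.) -/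
open scoped RealInnerProductSpace

/-- **Dynamical lemma for symmetric maps with an eigenvalue gap.**
If `T` is self-adjoint, `v⁺` is a unit eigenvector with eigenvalue `λ₁ > 0`, `‖T w‖ ≤ λ₂ ‖w‖`
on `(v⁺)^⊥`, and the gap satisfies `λ₂/λ₁ < ε²` with `0 < ε ≤ 1`, then `T` maps every nonzero
`v` with `cos∠(v, v⁺) ≥ ε` to a nonzero vector with `sin∠(T v, v⁺) < ε`. -/
theorem symmetric_gap_contraction
    {V : Type*} [NormedAddCommGroup V] [InnerProductSpace ℝ V] [FiniteDimensional ℝ V]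
    (T : V →ₗ[ℝ] V) (hT : ∀ x y : V, ⟪T x, y⟫ = ⟪x, T y⟫)
    (vp : V) (hvp : ‖vp‖ = 1)
    (l₁ l₂ : ℝ) (hl₁ : 0 < l₁) (hTvp : T vp = l₁ • vp)
    (hl₂ : 0 ≤ l₂) (hl₂' : ∀ w : V, ⟪w, vp⟫ = 0 → ‖T w‖ ≤ l₂ * ‖w‖)
    (ε : ℝ) (hε : 0 < ε) (hε1 : ε ≤ 1) (hgap : l₂ / l₁ < ε ^ 2) :
    ∀ v : V, v ≠ 0 → ε ≤ |⟪v, vp⟫| / (‖v‖ * ‖vp‖) →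
      T v ≠ 0 ∧ Real.sqrt (1 - (|⟪T v, vp⟫| / (‖T v‖ * ‖vp‖)) ^ 2) < ε := by
  intro v hv0 hv
  set a := ⟪v, vp⟫ with ha
  set w := v - a • vp with hw
  have hvpn : ⟪vp, vp⟫ = 1 := by
    rw [real_inner_self_eq_norm_sq, hvp]; norm_num
  have hwv : ⟪w, vp⟫ = 0 := by
    simp [hw, inner_sub_left, real_inner_smul_left, hvpn, hvp, ha]
  have hTwv : ⟪T w, vp⟫ = 0 := by
    rw [hT, hTvp, real_inner_smul_right, hwv, mul_zero]
  have hveq : v = w + a • vp := by rw [hw]; abel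
  have hTv : T v = T w + (a * l₁) • vp := by
    rw [hveq, map_add, map_smul, hTvp, smul_smul]
  have hnv : 0 < ‖v‖ := norm_pos_iff.mpr hv0
  have hav : ε * ‖v‖ ≤ |a| := by
    rw [hvp, mul_one, le_div_iff₀ hnv] at hv
    linarith
  have ha0 : 0 < |a| := lt_of_lt_of_le (by positivity) hav
  have hv2 : ‖v‖ ^ 2 = ‖w‖ ^ 2 + a ^ 2 := by
    rw [hveq, norm_add_sq_real, real_inner_smul_right, hwv, norm_smul, hvp]
    simp [sq_abs]
  have hwle : ‖w‖ ≤ ‖v‖ := by nlinarith [norm_nonneg w, norm_nonneg v, sq_nonneg a]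
  have hgap' : l₂ < ε ^ 2 * l₁ := by
    rw [div_lt_iff₀ hl₁] at hgap; linarith
  have hTwn : ‖T w‖ < ε * l₁ * |a| := by
    have h1 := hl₂' w hwv
    have h2 : l₂ * ‖w‖ ≤ l₂ * ‖v‖ := by nlinarith
    have h3 : l₂ * ‖v‖ < ε ^ 2 * l₁ * ‖v‖ := by nlinarith
    have h4 : ε ^ 2 * l₁ * ‖v‖ ≤ ε * l₁ * |a| := by nlinarith
    linarith
  have hinner : ⟪T v, vp⟫ = a * l₁ := by
    rw [hTv, inner_add_left, hTwv, real_inner_smul_left, hvpn]; ring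
  have hTv0 : T v ≠ 0 := by
    intro h
    rw [h, inner_zero_left] at hinner
    have : a ≠ 0 := fun h' => by simp [h'] at ha0
    exact this (by
      have := hinner.symm
      rcases mul_eq_zero.mp this with h' | h'
      · exact h'
      · exact absurd h' (ne_of_gt hl₁))
  refine ⟨hTv0, ?_⟩
  have hTvn : 0 < ‖T v‖ := norm_pos_iff.mpr hTv0
  have hTv2 : ‖T v‖ ^ 2 = ‖T w‖ ^ 2 + (a * l₁) ^ 2 := by
    rw [hTv, norm_add_sq_real, real_inner_smul_right, hTwv, norm_smul, hvp]
    simp [mul_pow, sq_abs]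
  have hTwsq : ‖T w‖ ^ 2 < ε ^ 2 * (a * l₁) ^ 2 := by
    have h : ‖T w‖ ^ 2 < (ε * l₁ * |a|) ^ 2 :=
      pow_lt_pow_left₀ hTwn (norm_nonneg (T w)) two_ne_zero
    rw [mul_pow, mul_pow, sq_abs] at h
    linarith
  have key : ‖T w‖ ^ 2 < ε ^ 2 * ‖T v‖ ^ 2 := by
    rw [hTv2, mul_add]
    linarith [mul_nonneg (sq_nonneg ε) (sq_nonneg ‖T w‖)]
  have hfrac : ‖T w‖ ^ 2 / ‖T v‖ ^ 2 < ε ^ 2 :=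
    (div_lt_iff₀ (by positivity)).mpr (by linarith)
  have heq : 1 - (a * l₁) ^ 2 / ‖T v‖ ^ 2 = ‖T w‖ ^ 2 / ‖T v‖ ^ 2 := by
    field_simp
    linarith [hTv2]
  rw [hinner, hvp, mul_one, div_pow, sq_abs, Real.sqrt_lt' hε, heq]
  exact hfrac
end

section
/- Let Γ be a subgroup of G and let V ⊆ G be a measurable set such that (V · V⁻¹) ∩ Γ ⊆ {1}. Then for every subset S ⊆ G and every finite subset F of Γ ∩ S, one has (card F) · μ(V) ≤ μ(S · V). In particular, if μ(V) > 0 and μ(S · V) < ∞ then Γ ∩ S is finite with card(Γ ∩ S) ≤ μ(S · V) / μ(V). -/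
open MeasureTheory
open scoped Pointwise

/-- **Volume bound on lattice points in a region.**
Let `μ` be a left-invariant Borel measure on a topological group `G`, `Γ ≤ G` a subgroup, and
`V ⊆ G` a measurable set with `(V · V⁻¹) ∩ Γ ⊆ {1}`.  Then for every `S ⊆ G` and every finite
`F ⊆ Γ ∩ S` one has `(card F) μ(V) ≤ μ(S · V)`; in particular if `μ(V) > 0` and `μ(S·V) < ∞`
then `Γ ∩ S` is finite of cardinality at most `μ(S·V)/μ(V)`. -/
theorem lattice_point_volume_bound
    {G : Type*} [Group G] [TopologicalSpace G] [IsTopologicalGroup G]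
    [MeasurableSpace G] [BorelSpace G]
    (μ : Measure G) [μ.IsMulLeftInvariant]
    (Γ : Subgroup G) (V : Set G) (hV : MeasurableSet V)
    (hVΓ : (V * V⁻¹) ∩ (Γ : Set G) ⊆ {1}) (S : Set G) :
    (∀ F : Finset G, (F : Set G) ⊆ (Γ : Set G) ∩ S →
        (F.card : ENNReal) * μ V ≤ μ (S * V)) ∧
      (0 < μ V → μ (S * V) < ⊤ →
        ((Γ : Set G) ∩ S).Finite ∧
          ((((Γ : Set G) ∩ S).ncard : ENNReal) ≤ μ (S * V) / μ V)) := by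
  have key : ∀ F : Finset G, (F : Set G) ⊆ (Γ : Set G) ∩ S →
      (F.card : ENNReal) * μ V ≤ μ (S * V) := by
    intro F hF
    have hdisj : (F : Set G).PairwiseDisjoint (fun γ => γ • V) := by
      intro γ₁ h₁ γ₂ h₂ hne
      refine Set.disjoint_left.2 ?_
      rintro x hx₁ hx₂
      rw [Set.mem_smul_set] at hx₁ hx₂
      obtain ⟨v₁, hv₁, rfl⟩ := hx₁
      obtain ⟨v₂, hv₂, he⟩ := hx₂
      have hΓ₁ : γ₁ ∈ Γ := (hF h₁).1
      have hΓ₂ : γ₂ ∈ Γ := (hF h₂).1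
      have hmem : γ₂⁻¹ * γ₁ ∈ (V * V⁻¹) ∩ (Γ : Set G) := by
        constructor
        · have : γ₂⁻¹ * γ₁ = v₂ * v₁⁻¹ := by
            have h : γ₂ * v₂ = γ₁ * v₁ := he
            rw [inv_mul_eq_iff_eq_mul, ← mul_assoc, h, mul_inv_cancel_right]
          rw [this]
          exact Set.mul_mem_mul hv₂ (Set.inv_mem_inv.2 hv₁)
        · exact Γ.mul_mem (Γ.inv_mem hΓ₂) hΓ₁
      have := hVΓ hmem
      simp only [Set.mem_singleton_iff] at this
      exact hne (by rw [inv_mul_eq_one] at this; exact this.symm)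
    have hmeas : ∀ γ ∈ F, MeasurableSet (γ • V) := fun γ _ => hV.const_smul γ
    have hsub : (⋃ γ ∈ F, γ • V) ⊆ S * V := by
      intro x hx
      simp only [Set.mem_iUnion] at hx
      obtain ⟨γ, hγ, hx⟩ := hx
      obtain ⟨v, hv, rfl⟩ := hx
      exact Set.mul_mem_mul (hF hγ).2 hv
    calc (F.card : ENNReal) * μ V = ∑ γ ∈ F, μ (γ • V) := by
          simp [measure_smul, Finset.sum_const, mul_comm]
      _ = μ (⋃ γ ∈ F, γ • V) := (measure_biUnion_finset hdisj hmeas).symm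
      _ ≤ μ (S * V) := measure_mono hsub
  refine ⟨key, fun hVpos hfin => ?_⟩
  have hfin' : ((Γ : Set G) ∩ S).Finite := by
    by_contra hinf
    have hinf : ((Γ : Set G) ∩ S).Infinite := hinf
    obtain ⟨n, hn⟩ := ENNReal.exists_nat_gt
      ((ENNReal.div_lt_top hfin.ne hVpos.ne').ne : μ (S * V) / μ V ≠ ⊤)
    obtain ⟨F, hFsub, hFcard⟩ := hinf.exists_subset_card_eq n
    have h1 := key F hFsub
    rw [hFcard] at h1
    have h2 : (n : ENNReal) ≤ μ (S * V) / μ V :=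
      (ENNReal.le_div_iff_mul_le (Or.inl hVpos.ne') (Or.inr hfin.ne)).2 h1
    exact absurd h2 (not_le.2 hn)
  refine ⟨hfin', ?_⟩
  have h1 := key hfin'.toFinset (by simp)
  rw [Set.ncard_eq_toFinset_card _ hfin']
  exact (ENNReal.le_div_iff_mul_le (Or.inl hVpos.ne') (Or.inr hfin.ne)).2 h1
end

section
/- Let G be a group, K a subgroup of G, a ∈ G and k ∈ K. If a⁻ⁿ (a k)ⁿ ∈ K for every integer n ∈ ℤ, then a⁻ⁿ k aⁿ ∈ K for every integer n ∈ ℤ. -/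
/-- **Telescoping conjugation lemma.**
In a group `G` with subgroup `K`, if `a ∈ G`, `k ∈ K` and `a⁻ⁿ (a k)ⁿ ∈ K` for every `n ∈ ℤ`,
then `a⁻ⁿ k aⁿ ∈ K` for every `n ∈ ℤ`. -/
theorem telescoping_conjugation
    {G : Type*} [Group G] (K : Subgroup G) (a k : G) (hk : k ∈ K)
    (h : ∀ n : ℤ, a ^ (-n) * (a * k) ^ n ∈ K) :
    ∀ n : ℤ, a ^ (-n) * k * a ^ n ∈ K := by
  intro n
  have key : a ^ (-n) * k * a ^ n
      = (a ^ (-(n + 1)) * (a * k) ^ (n + 1)) * (a ^ (-n) * (a * k) ^ n)⁻¹ := by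
    group
  rw [key]
  exact mul_mem (h (n + 1)) (inv_mem (h n))
end
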